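/- arXiv:2510.00447 — 3 statements merged into one kernel-verified Lean document; each statement's English description precedes it below -/
import Mathlib

section
/- Let α, Φ ∈ ℝ, let k ≥ 2 be an integer, and let a₀, a₁, …, a_{k−1} ∈ ℂ. Define the standing wave ψ(θ₁,θ₂) = Σ_{n=1}^{k−1} a_n (e^{inθ₁} + e^{−inθ₁}) e^{i(k−n)θ₂} + a₀ e^{ikθ₂} and the function χ_Φ(θ₁,θ₂) = 2α [ sin(θ₁−Φ) a₀ e^{i(k−1)θ₂} + sin(θ₁−Φ+θ₂) Σ_{n=1}^{k−1} a_n e^{−inθ₁} e^{i(k−n)θ₂} + sin(θ₁−Φ−θ₂) Σ_{n=1}^{k−1} a_n e^{inθ₁} e^{i(k−n)θ₂} ]. Then ∫₀^{2π}∫₀^{2π} conj(ψ(θ₁,θ₂)) · χ_Φ(θ₁,θ₂) dθ₁ dθ₂ = −8πα C sin Φ, where C = 2π · Re( Σ_{n=0}^{k−2} conj(a_{n+1}) a_n ). -/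
noncomputable section

/-- The standing wave
`ψ(θ₁,θ₂) = Σ_{n=1}^{k−1} aₙ (e^{inθ₁}+e^{−inθ₁}) e^{i(k−n)θ₂} + a₀ e^{ikθ₂}`. -/
def psiEven (k : ℕ) (a : ℕ → ℂ) (θ₁ θ₂ : ℝ) : ℂ :=
  (∑ n ∈ Finset.Icc 1 (k - 1), a n
      * (Complex.exp (Complex.I * ((n : ℂ) * (θ₁ : ℂ)))
          + Complex.exp (-(Complex.I * ((n : ℂ) * (θ₁ : ℂ)))))
      * Complex.exp (Complex.I * (((k - n : ℕ) : ℂ) * (θ₂ : ℂ))))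
    + a 0 * Complex.exp (Complex.I * ((k : ℂ) * (θ₂ : ℂ)))

/-- The Josephson current `I_{S¹}(Φ)` applied to the standing wave `psiEven`. -/
def chiEven (α Φ : ℝ) (k : ℕ) (a : ℕ → ℂ) (θ₁ θ₂ : ℝ) : ℂ :=
  2 * (α : ℂ) *
    (Complex.sin ((θ₁ : ℂ) - (Φ : ℂ)) * a 0
        * Complex.exp (Complex.I * (((k - 1 : ℕ) : ℂ) * (θ₂ : ℂ)))
      + Complex.sin ((θ₁ : ℂ) - (Φ : ℂ) + (θ₂ : ℂ))
        * ∑ n ∈ Finset.Icc 1 (k - 1), a n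
            * Complex.exp (-(Complex.I * ((n : ℂ) * (θ₁ : ℂ))))
            * Complex.exp (Complex.I * (((k - n : ℕ) : ℂ) * (θ₂ : ℂ)))
      + Complex.sin ((θ₁ : ℂ) - (Φ : ℂ) - (θ₂ : ℂ))
        * ∑ n ∈ Finset.Icc 1 (k - 1), a n
            * Complex.exp (Complex.I * ((n : ℂ) * (θ₁ : ℂ)))
            * Complex.exp (Complex.I * (((k - n : ℕ) : ℂ) * (θ₂ : ℂ))))

/-- The one-mode shifted standing wave
`ψ(θ₁,θ₂) = Σ_{n=0}^{k−2} aₙ (e^{inθ₁}+e^{−i(n+1)θ₁}) e^{−i(k−n)θ₂}`. -/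
def psiOdd (k : ℕ) (a : ℕ → ℂ) (θ₁ θ₂ : ℝ) : ℂ :=
  ∑ n ∈ Finset.range (k - 1), a n
    * (Complex.exp (Complex.I * ((n : ℂ) * (θ₁ : ℂ)))
        + Complex.exp (-(Complex.I * (((n : ℂ) + 1) * (θ₁ : ℂ)))))
    * Complex.exp (-(Complex.I * (((k - n : ℕ) : ℂ) * (θ₂ : ℂ))))

/-- The Josephson current `I_{S¹}(Φ)` applied to the one-mode shifted standing
wave `psiOdd`. -/
def chiOdd (α Φ : ℝ) (k : ℕ) (a : ℕ → ℂ) (θ₁ θ₂ : ℝ) : ℂ :=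
  2 * (α : ℂ) *
    (Complex.sin ((θ₁ : ℂ) - (Φ : ℂ) + (θ₂ : ℂ))
        * ∑ n ∈ Finset.range (k - 1), a n
            * Complex.exp (Complex.I * ((n : ℂ) * (θ₁ : ℂ)))
            * Complex.exp (-(Complex.I * (((k - n : ℕ) : ℂ) * (θ₂ : ℂ))))
      + Complex.sin ((θ₁ : ℂ) - (Φ : ℂ) - (θ₂ : ℂ))
        * ∑ n ∈ Finset.range (k - 1), a n
            * Complex.exp (-(Complex.I * (((n : ℂ) + 1) * (θ₁ : ℂ))))
            * Complex.exp (-(Complex.I * (((k - n : ℕ) : ℂ) * (θ₂ : ℂ)))))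
namespace S17
open Complex Finset intervalIntegral MeasureTheory

def e (m : ℤ) (θ : ℝ) : ℂ := Complex.exp (Complex.I * (m : ℂ) * (θ : ℂ))

def E (m : ℤ) : ℂ := if m = 0 then ((2 * Real.pi : ℝ) : ℂ) else 0

lemma e_def (m : ℤ) (θ : ℝ) : e m θ = Complex.exp (Complex.I * (m : ℂ) * (θ : ℂ)) := rfl

lemma E_zero : E 0 = ((2 * Real.pi : ℝ) : ℂ) := if_pos rfl
lemma E_ne {m : ℤ} (h : m ≠ 0) : E m = 0 := if_neg h

lemma exp_eq_e {z : ℂ} {m : ℤ} {θ : ℝ} (h : z = Complex.I * (m : ℂ) * (θ : ℂ)) :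
    Complex.exp z = e m θ := by rw [h]; rfl

lemma conj_exp_eq {z : ℂ} {m : ℤ} {θ : ℝ}
    (h : (starRingEnd ℂ) z = Complex.I * (m : ℂ) * (θ : ℂ)) :
    (starRingEnd ℂ) (Complex.exp z) = e m θ := by
  rw [← Complex.exp_conj, h]; rfl

lemma e_mul (p q : ℤ) (θ : ℝ) : e p θ * e q θ = e (p + q) θ := by
  rw [e_def, e_def, e_def, ← Complex.exp_add]; congr 1; push_cast; ring

lemma e_split (p q r : ℤ) (θ : ℝ) (h : p + q = r) : e r θ = e p θ * e q θ := by
  rw [e_mul, h]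

lemma e_cont (m : ℤ) : Continuous (e m) := by
  unfold e; fun_prop

lemma term_mul {c1 c2 : ℂ} {p1 q1 p2 q2 P Q : ℤ} (θ₁ θ₂ : ℝ) (hP : p1 + p2 = P)
    (hQ : q1 + q2 = Q) :
    (c1 * e p1 θ₁ * e q1 θ₂) * (c2 * e p2 θ₁ * e q2 θ₂) = c1 * c2 * e P θ₁ * e Q θ₂ := by
  rw [e_split p1 p2 P θ₁ hP, e_split q1 q2 Q θ₂ hQ]; ring

lemma e_int (m : ℤ) : (∫ θ in (0:ℝ)..(2 * Real.pi), e m θ) = E m := by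
  rcases eq_or_ne m 0 with h | h
  · subst h
    simp [e, E, Complex.real_smul]
  · simp only [e]
    rw [integral_exp_mul_complex (mul_ne_zero Complex.I_ne_zero (Int.cast_ne_zero.mpr h))]
    rw [show Complex.I * (m:ℂ) * ((2*Real.pi:ℝ):ℂ) = (m:ℂ) * (2*(Real.pi:ℂ)*Complex.I) by
      push_cast; ring, Complex.exp_int_mul_two_pi_mul_I]
    simp [E, h]


lemma inner_eval (s t : Finset ℕ) (c : ℕ → ℕ → ℂ) (p q : ℕ → ℕ → ℤ) (θ₁ : ℝ) :
    (∫ θ₂ in (0:ℝ)..(2 * Real.pi),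
      ∑ n ∈ s, ∑ m ∈ t, c n m * e (p n m) θ₁ * e (q n m) θ₂)
    = ∑ n ∈ s, ∑ m ∈ t, c n m * e (p n m) θ₁ * E (q n m) := by
  rw [intervalIntegral.integral_finset_sum
    (f := fun n θ₂ => ∑ m ∈ t, c n m * e (p n m) θ₁ * e (q n m) θ₂) (fun n _ =>
    (Continuous.intervalIntegrable (continuous_finset_sum _ fun m _ =>
      continuous_const.mul (e_cont _)) _ _))]
  refine Finset.sum_congr rfl fun n _ => ?_
  rw [intervalIntegral.integral_finset_sum
    (f := fun m θ₂ => c n m * e (p n m) θ₁ * e (q n m) θ₂) (fun m _ =>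
    (Continuous.intervalIntegrable (continuous_const.mul (e_cont _)) _ _))]
  exact Finset.sum_congr rfl fun m _ => by
    rw [intervalIntegral.integral_const_mul, e_int]

lemma outer_eval (s t : Finset ℕ) (c : ℕ → ℕ → ℂ) (p q : ℕ → ℕ → ℤ) :
    (∫ θ₁ in (0:ℝ)..(2 * Real.pi),
      ∑ n ∈ s, ∑ m ∈ t, c n m * e (p n m) θ₁ * E (q n m))
    = ∑ n ∈ s, ∑ m ∈ t, c n m * E (p n m) * E (q n m) := by
  rw [intervalIntegral.integral_finset_sum
    (f := fun n θ₁ => ∑ m ∈ t, c n m * e (p n m) θ₁ * E (q n m)) (fun n _ =>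
    (Continuous.intervalIntegrable (continuous_finset_sum _ fun m _ =>
      (continuous_const.mul (e_cont _)).mul continuous_const) _ _))]
  refine Finset.sum_congr rfl fun n _ => ?_
  rw [intervalIntegral.integral_finset_sum
    (f := fun m θ₁ => c n m * e (p n m) θ₁ * E (q n m)) (fun m _ =>
    (Continuous.intervalIntegrable ((continuous_const.mul (e_cont _)).mul continuous_const) _ _))]
  refine Finset.sum_congr rfl fun m _ => ?_
  rw [show (fun θ₁ : ℝ => c n m * e (p n m) θ₁ * E (q n m))
      = fun θ₁ => (c n m * E (q n m)) * e (p n m) θ₁ from funext fun θ₁ => by ring]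
  rw [intervalIntegral.integral_const_mul, e_int]; ring

lemma Icc0ins (K : ℕ) : Finset.Icc 0 K = insert 0 (Finset.Icc 1 K) := by
  ext x; simp [Finset.mem_Icc]; omega

lemma guard_sum (K : ℕ) (v : ℕ → ℂ) :
    ∑ n ∈ Finset.Icc 0 K, (if n = 0 then 0 else v n) = ∑ n ∈ Finset.Icc 1 K, v n := by
  rw [Icc0ins K, Finset.sum_insert (by simp), if_pos rfl, zero_add]
  exact Finset.sum_congr rfl fun n hn =>
    if_neg (by simp [Finset.mem_Icc] at hn; omega)

lemma sum_shift (K : ℕ) (f : ℕ → ℂ) :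
    ∑ n ∈ Finset.Icc 1 K, f n = ∑ n ∈ Finset.range K, f (n + 1) := by
  rw [← Finset.Ico_add_one_right_eq_Icc, Finset.sum_Ico_eq_sum_range]
  exact Finset.sum_congr (by rw [Nat.add_sub_cancel]) fun i _ => by rw [Nat.add_comm]

def w1 (α Φ : ℝ) : ℂ := (α : ℂ) * Complex.I * Complex.exp ((Φ : ℂ) * Complex.I)
def w2 (α Φ : ℝ) : ℂ := -((α : ℂ) * Complex.I * Complex.exp (-(Φ : ℂ) * Complex.I))

lemma w_add (α Φ : ℝ) : w1 α Φ + w2 α Φ = -2 * (α : ℂ) * Complex.sin (Φ : ℂ) := by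
  simp only [w1, w2, Complex.sin]; ring


lemma master8
    (s₁ t₁ s₂ t₂ s₃ t₃ s₄ t₄ s₅ t₅ s₆ t₆ s₇ t₇ s₈ t₈ : Finset ℕ)
    (c₁ c₂ c₃ c₄ c₅ c₆ c₇ c₈ : ℕ → ℕ → ℂ)
    (p₁ q₁ p₂ q₂ p₃ q₃ p₄ q₄ p₅ q₅ p₆ q₆ p₇ q₇ p₈ q₈ : ℕ → ℕ → ℤ) :
    (∫ θ₁ in (0:ℝ)..(2 * Real.pi), ∫ θ₂ in (0:ℝ)..(2 * Real.pi),
      ((∑ n ∈ s₁, ∑ m ∈ t₁, c₁ n m * e (p₁ n m) θ₁ * e (q₁ n m) θ₂)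
        + (∑ n ∈ s₂, ∑ m ∈ t₂, c₂ n m * e (p₂ n m) θ₁ * e (q₂ n m) θ₂)
        + (∑ n ∈ s₃, ∑ m ∈ t₃, c₃ n m * e (p₃ n m) θ₁ * e (q₃ n m) θ₂)
        + (∑ n ∈ s₄, ∑ m ∈ t₄, c₄ n m * e (p₄ n m) θ₁ * e (q₄ n m) θ₂)
        + (∑ n ∈ s₅, ∑ m ∈ t₅, c₅ n m * e (p₅ n m) θ₁ * e (q₅ n m) θ₂)
        + (∑ n ∈ s₆, ∑ m ∈ t₆, c₆ n m * e (p₆ n m) θ₁ * e (q₆ n m) θ₂)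
        + (∑ n ∈ s₇, ∑ m ∈ t₇, c₇ n m * e (p₇ n m) θ₁ * e (q₇ n m) θ₂)
        + (∑ n ∈ s₈, ∑ m ∈ t₈, c₈ n m * e (p₈ n m) θ₁ * e (q₈ n m) θ₂)))
    = (∑ n ∈ s₁, ∑ m ∈ t₁, c₁ n m * E (p₁ n m) * E (q₁ n m))
        + (∑ n ∈ s₂, ∑ m ∈ t₂, c₂ n m * E (p₂ n m) * E (q₂ n m))
        + (∑ n ∈ s₃, ∑ m ∈ t₃, c₃ n m * E (p₃ n m) * E (q₃ n m))
        + (∑ n ∈ s₄, ∑ m ∈ t₄, c₄ n m * E (p₄ n m) * E (q₄ n m))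
        + (∑ n ∈ s₅, ∑ m ∈ t₅, c₅ n m * E (p₅ n m) * E (q₅ n m))
        + (∑ n ∈ s₆, ∑ m ∈ t₆, c₆ n m * E (p₆ n m) * E (q₆ n m))
        + (∑ n ∈ s₇, ∑ m ∈ t₇, c₇ n m * E (p₇ n m) * E (q₇ n m))
        + (∑ n ∈ s₈, ∑ m ∈ t₈, c₈ n m * E (p₈ n m) * E (q₈ n m)) := by
  have J : ∀ (θ₁ : ℝ) (s t : Finset ℕ) (c : ℕ → ℕ → ℂ) (p q : ℕ → ℕ → ℤ),
      IntervalIntegrable (fun θ₂ : ℝ => ∑ n ∈ s, ∑ m ∈ t, c n m * e (p n m) θ₁ * e (q n m) θ₂)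
        volume 0 (2 * Real.pi) := fun θ₁ s t c p q =>
    Continuous.intervalIntegrable (continuous_finset_sum _ fun n _ =>
      continuous_finset_sum _ fun m _ => continuous_const.mul (e_cont _)) _ _
  have hin : ∀ θ₁ : ℝ, (∫ θ₂ in (0:ℝ)..(2 * Real.pi),
      ((∑ n ∈ s₁, ∑ m ∈ t₁, c₁ n m * e (p₁ n m) θ₁ * e (q₁ n m) θ₂)
        + (∑ n ∈ s₂, ∑ m ∈ t₂, c₂ n m * e (p₂ n m) θ₁ * e (q₂ n m) θ₂)
        + (∑ n ∈ s₃, ∑ m ∈ t₃, c₃ n m * e (p₃ n m) θ₁ * e (q₃ n m) θ₂)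
        + (∑ n ∈ s₄, ∑ m ∈ t₄, c₄ n m * e (p₄ n m) θ₁ * e (q₄ n m) θ₂)
        + (∑ n ∈ s₅, ∑ m ∈ t₅, c₅ n m * e (p₅ n m) θ₁ * e (q₅ n m) θ₂)
        + (∑ n ∈ s₆, ∑ m ∈ t₆, c₆ n m * e (p₆ n m) θ₁ * e (q₆ n m) θ₂)
        + (∑ n ∈ s₇, ∑ m ∈ t₇, c₇ n m * e (p₇ n m) θ₁ * e (q₇ n m) θ₂)
        + (∑ n ∈ s₈, ∑ m ∈ t₈, c₈ n m * e (p₈ n m) θ₁ * e (q₈ n m) θ₂)))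
      = (∑ n ∈ s₁, ∑ m ∈ t₁, c₁ n m * e (p₁ n m) θ₁ * E (q₁ n m))
        + (∑ n ∈ s₂, ∑ m ∈ t₂, c₂ n m * e (p₂ n m) θ₁ * E (q₂ n m))
        + (∑ n ∈ s₃, ∑ m ∈ t₃, c₃ n m * e (p₃ n m) θ₁ * E (q₃ n m))
        + (∑ n ∈ s₄, ∑ m ∈ t₄, c₄ n m * e (p₄ n m) θ₁ * E (q₄ n m))
        + (∑ n ∈ s₅, ∑ m ∈ t₅, c₅ n m * e (p₅ n m) θ₁ * E (q₅ n m))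
        + (∑ n ∈ s₆, ∑ m ∈ t₆, c₆ n m * e (p₆ n m) θ₁ * E (q₆ n m))
        + (∑ n ∈ s₇, ∑ m ∈ t₇, c₇ n m * e (p₇ n m) θ₁ * E (q₇ n m))
        + (∑ n ∈ s₈, ∑ m ∈ t₈, c₈ n m * e (p₈ n m) θ₁ * E (q₈ n m)) := by
    intro θ₁
    rw [intervalIntegral.integral_add
          ((((((((J θ₁ s₁ t₁ c₁ p₁ q₁).add (J θ₁ s₂ t₂ c₂ p₂ q₂)).add
            (J θ₁ s₃ t₃ c₃ p₃ q₃)).add (J θ₁ s₄ t₄ c₄ p₄ q₄)).add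
            (J θ₁ s₅ t₅ c₅ p₅ q₅)).add (J θ₁ s₆ t₆ c₆ p₆ q₆)).add
            (J θ₁ s₇ t₇ c₇ p₇ q₇))) (J θ₁ s₈ t₈ c₈ p₈ q₈),
        intervalIntegral.integral_add
          (((((((J θ₁ s₁ t₁ c₁ p₁ q₁).add (J θ₁ s₂ t₂ c₂ p₂ q₂)).add
            (J θ₁ s₃ t₃ c₃ p₃ q₃)).add (J θ₁ s₄ t₄ c₄ p₄ q₄)).add
            (J θ₁ s₅ t₅ c₅ p₅ q₅)).add (J θ₁ s₆ t₆ c₆ p₆ q₆))) (J θ₁ s₇ t₇ c₇ p₇ q₇),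
        intervalIntegral.integral_add
          ((((((J θ₁ s₁ t₁ c₁ p₁ q₁).add (J θ₁ s₂ t₂ c₂ p₂ q₂)).add
            (J θ₁ s₃ t₃ c₃ p₃ q₃)).add (J θ₁ s₄ t₄ c₄ p₄ q₄)).add
            (J θ₁ s₅ t₅ c₅ p₅ q₅))) (J θ₁ s₆ t₆ c₆ p₆ q₆),
        intervalIntegral.integral_add
          (((((J θ₁ s₁ t₁ c₁ p₁ q₁).add (J θ₁ s₂ t₂ c₂ p₂ q₂)).add
            (J θ₁ s₃ t₃ c₃ p₃ q₃)).add (J θ₁ s₄ t₄ c₄ p₄ q₄))) (J θ₁ s₅ t₅ c₅ p₅ q₅),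
        intervalIntegral.integral_add
          ((((J θ₁ s₁ t₁ c₁ p₁ q₁).add (J θ₁ s₂ t₂ c₂ p₂ q₂)).add
            (J θ₁ s₃ t₃ c₃ p₃ q₃))) (J θ₁ s₄ t₄ c₄ p₄ q₄),
        intervalIntegral.integral_add
          (((J θ₁ s₁ t₁ c₁ p₁ q₁).add (J θ₁ s₂ t₂ c₂ p₂ q₂))) (J θ₁ s₃ t₃ c₃ p₃ q₃),
        intervalIntegral.integral_add (J θ₁ s₁ t₁ c₁ p₁ q₁) (J θ₁ s₂ t₂ c₂ p₂ q₂)]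
    rw [inner_eval, inner_eval, inner_eval, inner_eval, inner_eval, inner_eval,
      inner_eval, inner_eval]
  refine (intervalIntegral.integral_congr fun θ₁ _ => hin θ₁).trans ?_
  have J2 : ∀ (s t : Finset ℕ) (c : ℕ → ℕ → ℂ) (p q : ℕ → ℕ → ℤ),
      IntervalIntegrable (fun θ₁ : ℝ => ∑ n ∈ s, ∑ m ∈ t, c n m * e (p n m) θ₁ * E (q n m))
        volume 0 (2 * Real.pi) := fun s t c p q =>
    Continuous.intervalIntegrable (continuous_finset_sum _ fun n _ =>
      continuous_finset_sum _ fun m _ => (continuous_const.mul (e_cont _)).mul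
        continuous_const) _ _
  rw [intervalIntegral.integral_add
        ((((((((J2 s₁ t₁ c₁ p₁ q₁).add (J2 s₂ t₂ c₂ p₂ q₂)).add
          (J2 s₃ t₃ c₃ p₃ q₃)).add (J2 s₄ t₄ c₄ p₄ q₄)).add
          (J2 s₅ t₅ c₅ p₅ q₅)).add (J2 s₆ t₆ c₆ p₆ q₆)).add
          (J2 s₇ t₇ c₇ p₇ q₇))) (J2 s₈ t₈ c₈ p₈ q₈),
      intervalIntegral.integral_add
        (((((((J2 s₁ t₁ c₁ p₁ q₁).add (J2 s₂ t₂ c₂ p₂ q₂)).add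
          (J2 s₃ t₃ c₃ p₃ q₃)).add (J2 s₄ t₄ c₄ p₄ q₄)).add
          (J2 s₅ t₅ c₅ p₅ q₅)).add (J2 s₆ t₆ c₆ p₆ q₆))) (J2 s₇ t₇ c₇ p₇ q₇),
      intervalIntegral.integral_add
        ((((((J2 s₁ t₁ c₁ p₁ q₁).add (J2 s₂ t₂ c₂ p₂ q₂)).add
          (J2 s₃ t₃ c₃ p₃ q₃)).add (J2 s₄ t₄ c₄ p₄ q₄)).add
          (J2 s₅ t₅ c₅ p₅ q₅))) (J2 s₆ t₆ c₆ p₆ q₆),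
      intervalIntegral.integral_add
        (((((J2 s₁ t₁ c₁ p₁ q₁).add (J2 s₂ t₂ c₂ p₂ q₂)).add
          (J2 s₃ t₃ c₃ p₃ q₃)).add (J2 s₄ t₄ c₄ p₄ q₄))) (J2 s₅ t₅ c₅ p₅ q₅),
      intervalIntegral.integral_add
        ((((J2 s₁ t₁ c₁ p₁ q₁).add (J2 s₂ t₂ c₂ p₂ q₂)).add
          (J2 s₃ t₃ c₃ p₃ q₃))) (J2 s₄ t₄ c₄ p₄ q₄),
      intervalIntegral.integral_add
        (((J2 s₁ t₁ c₁ p₁ q₁).add (J2 s₂ t₂ c₂ p₂ q₂))) (J2 s₃ t₃ c₃ p₃ q₃),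
      intervalIntegral.integral_add (J2 s₁ t₁ c₁ p₁ q₁) (J2 s₂ t₂ c₂ p₂ q₂)]
  rw [outer_eval, outer_eval, outer_eval, outer_eval, outer_eval, outer_eval,
    outer_eval, outer_eval]


lemma hY (k : ℕ) (hk : 2 ≤ k) (a : ℕ → ℂ) (θ₁ θ₂ : ℝ) :
    (starRingEnd ℂ) (psiEven k a θ₁ θ₂) =
      (∑ n ∈ Finset.Icc 1 (k-1),
        (starRingEnd ℂ) (a n) * e (-(n:ℤ)) θ₁ * e ((n:ℤ) - (k:ℤ)) θ₂)
      + ∑ n ∈ Finset.Icc 0 (k-1),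
        (starRingEnd ℂ) (a n) * e ((n:ℤ)) θ₁ * e ((n:ℤ) - (k:ℤ)) θ₂ := by
  rw [Icc0ins]
  rw [Finset.sum_insert (by simp)]
  simp only [psiEven, map_add, map_sum, map_mul]
  have hterm : ∀ n ∈ Finset.Icc 1 (k-1),
      (starRingEnd ℂ) (a n) *
        ((starRingEnd ℂ) (Complex.exp (Complex.I * ((n:ℂ) * (θ₁:ℂ))))
          + (starRingEnd ℂ) (Complex.exp (-(Complex.I * ((n:ℂ) * (θ₁:ℂ)))))) *
        (starRingEnd ℂ) (Complex.exp (Complex.I * (((k-n:ℕ):ℂ) * (θ₂:ℂ))))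
      = (starRingEnd ℂ) (a n) * e (-(n:ℤ)) θ₁ * e ((n:ℤ)-(k:ℤ)) θ₂
        + (starRingEnd ℂ) (a n) * e ((n:ℤ)) θ₁ * e ((n:ℤ)-(k:ℤ)) θ₂ := by
    intro n hn
    have hnk : n ≤ k := le_trans (Finset.mem_Icc.mp hn).2 (by omega)
    rw [conj_exp_eq (m := -(n:ℤ))
        (by simp only [map_mul, Complex.conj_I, Complex.conj_ofReal, map_natCast]
            push_cast; ring),
      conj_exp_eq (m := (n:ℤ))
        (by simp only [map_neg, map_mul, Complex.conj_I, Complex.conj_ofReal, map_natCast]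
            push_cast; ring),
      conj_exp_eq (m := (n:ℤ)-(k:ℤ))
        (by simp only [map_mul, Complex.conj_I, Complex.conj_ofReal, map_natCast]
            rw [Nat.cast_sub hnk]; push_cast; ring)]
    ring
  rw [Finset.sum_congr rfl hterm, Finset.sum_add_distrib]
  rw [conj_exp_eq (m := ((0:ℕ):ℤ)-(k:ℤ))
      (by simp only [map_mul, Complex.conj_I, Complex.conj_ofReal, map_natCast]
          push_cast; ring)]
  rw [show e (((0:ℕ)):ℤ) θ₁ = 1 by simp [e_def]]
  ring

lemma hX (α Φ : ℝ) (k : ℕ) (hk : 2 ≤ k) (a : ℕ → ℂ) (θ₁ θ₂ : ℝ) :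
    chiEven α Φ k a θ₁ θ₂ =
      (∑ m ∈ Finset.Icc 0 (k-1),
        a m * w1 α Φ * e (-(m:ℤ)-1) θ₁ * e ((k:ℤ)-(m:ℤ)-1) θ₂)
      + (∑ m ∈ Finset.Icc 1 (k-1),
        a m * w2 α Φ * e (-(m:ℤ)+1) θ₁ * e ((k:ℤ)-(m:ℤ)+1) θ₂)
      + (∑ m ∈ Finset.Icc 1 (k-1),
        a m * w1 α Φ * e ((m:ℤ)-1) θ₁ * e ((k:ℤ)-(m:ℤ)+1) θ₂)
      + ∑ m ∈ Finset.Icc 0 (k-1),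
        a m * w2 α Φ * e ((m:ℤ)+1) θ₁ * e ((k:ℤ)-(m:ℤ)-1) θ₂ := by
  have h0mem : (0:ℕ) ∉ Finset.Icc 1 (k-1) := by simp
  rw [Icc0ins]
  rw [Finset.sum_insert h0mem, Finset.sum_insert h0mem]
  simp only [chiEven]
  rw [mul_add, mul_add]
  have hA : 2 * (α:ℂ) * (Complex.sin ((θ₁:ℂ) - (Φ:ℂ)) * a 0
        * Complex.exp (Complex.I * (((k-1:ℕ):ℂ) * (θ₂:ℂ))))
      = a 0 * w1 α Φ * e (-((0:ℕ):ℤ)-1) θ₁ * e ((k:ℤ)-((0:ℕ):ℤ)-1) θ₂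
        + a 0 * w2 α Φ * e (((0:ℕ):ℤ)+1) θ₁ * e ((k:ℤ)-((0:ℕ):ℤ)-1) θ₂ := by
    have h1 : Complex.exp (-((θ₁:ℂ) - (Φ:ℂ)) * Complex.I)
        = Complex.exp ((Φ:ℂ) * Complex.I) * e (-1) θ₁ := by
      rw [e_def, ← Complex.exp_add]; congr 1; push_cast; ring
    have h2 : Complex.exp (((θ₁:ℂ) - (Φ:ℂ)) * Complex.I)
        = Complex.exp (-(Φ:ℂ) * Complex.I) * e 1 θ₁ := by
      rw [e_def, ← Complex.exp_add]; congr 1; push_cast; ring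
    have h3 : Complex.exp (Complex.I * (((k-1:ℕ):ℂ) * (θ₂:ℂ))) = e ((k:ℤ)-1) θ₂ :=
      exp_eq_e (by rw [Nat.cast_sub (by omega : 1 ≤ k)]; push_cast; ring)
    have h4 : e (-((0:ℕ):ℤ)-1) θ₁ = e (-1) θ₁ := by norm_num
    have h5 : e (((0:ℕ):ℤ)+1) θ₁ = e 1 θ₁ := by norm_num
    have h6 : e ((k:ℤ)-((0:ℕ):ℤ)-1) θ₂ = e ((k:ℤ)-1) θ₂ := by norm_num
    simp only [Complex.sin]
    rw [h1, h2, h3, h4, h5, h6]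
    simp only [w1, w2]
    ring
  have hB : 2 * (α:ℂ) * (Complex.sin ((θ₁:ℂ) - (Φ:ℂ) + (θ₂:ℂ))
        * ∑ m ∈ Finset.Icc 1 (k-1), a m
            * Complex.exp (-(Complex.I * ((m:ℂ) * (θ₁:ℂ))))
            * Complex.exp (Complex.I * (((k-m:ℕ):ℂ) * (θ₂:ℂ))))
      = (∑ m ∈ Finset.Icc 1 (k-1),
          a m * w1 α Φ * e (-(m:ℤ)-1) θ₁ * e ((k:ℤ)-(m:ℤ)-1) θ₂)
        + ∑ m ∈ Finset.Icc 1 (k-1),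
          a m * w2 α Φ * e (-(m:ℤ)+1) θ₁ * e ((k:ℤ)-(m:ℤ)+1) θ₂ := by
    rw [Finset.mul_sum, Finset.mul_sum, ← Finset.sum_add_distrib]
    refine Finset.sum_congr rfl fun m hm => ?_
    have hmk : m ≤ k := le_trans (Finset.mem_Icc.mp hm).2 (by omega)
    have h1 : Complex.exp (-((θ₁:ℂ) - (Φ:ℂ) + (θ₂:ℂ)) * Complex.I)
        = Complex.exp ((Φ:ℂ) * Complex.I) * (e (-1) θ₁ * e (-1) θ₂) := by
      rw [e_def, e_def, ← Complex.exp_add, ← Complex.exp_add]; congr 1; push_cast; ring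
    have h2 : Complex.exp (((θ₁:ℂ) - (Φ:ℂ) + (θ₂:ℂ)) * Complex.I)
        = Complex.exp (-(Φ:ℂ) * Complex.I) * (e 1 θ₁ * e 1 θ₂) := by
      rw [e_def, e_def, ← Complex.exp_add, ← Complex.exp_add]; congr 1; push_cast; ring
    have h3 : Complex.exp (-(Complex.I * ((m:ℂ) * (θ₁:ℂ)))) = e (-(m:ℤ)) θ₁ :=
      exp_eq_e (by push_cast; ring)
    have h4 : Complex.exp (Complex.I * (((k-m:ℕ):ℂ) * (θ₂:ℂ))) = e ((k:ℤ)-(m:ℤ)) θ₂ :=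
      exp_eq_e (by rw [Nat.cast_sub hmk]; push_cast; ring)
    simp only [Complex.sin]
    rw [h1, h2, h3, h4,
      e_split (-(m:ℤ)) (-1) (-(m:ℤ)-1) θ₁ (by ring), e_split ((k:ℤ)-(m:ℤ)) (-1) ((k:ℤ)-(m:ℤ)-1) θ₂ (by ring),
      e_split (-(m:ℤ)) 1 (-(m:ℤ)+1) θ₁ (by ring), e_split ((k:ℤ)-(m:ℤ)) 1 ((k:ℤ)-(m:ℤ)+1) θ₂ (by ring)]
    simp only [w1, w2]
    ring
  have hC : 2 * (α:ℂ) * (Complex.sin ((θ₁:ℂ) - (Φ:ℂ) - (θ₂:ℂ))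
        * ∑ m ∈ Finset.Icc 1 (k-1), a m
            * Complex.exp (Complex.I * ((m:ℂ) * (θ₁:ℂ)))
            * Complex.exp (Complex.I * (((k-m:ℕ):ℂ) * (θ₂:ℂ))))
      = (∑ m ∈ Finset.Icc 1 (k-1),
          a m * w1 α Φ * e ((m:ℤ)-1) θ₁ * e ((k:ℤ)-(m:ℤ)+1) θ₂)
        + ∑ m ∈ Finset.Icc 1 (k-1),
          a m * w2 α Φ * e ((m:ℤ)+1) θ₁ * e ((k:ℤ)-(m:ℤ)-1) θ₂ := by
    rw [Finset.mul_sum, Finset.mul_sum, ← Finset.sum_add_distrib]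
    refine Finset.sum_congr rfl fun m hm => ?_
    have hmk : m ≤ k := le_trans (Finset.mem_Icc.mp hm).2 (by omega)
    have h1 : Complex.exp (-((θ₁:ℂ) - (Φ:ℂ) - (θ₂:ℂ)) * Complex.I)
        = Complex.exp ((Φ:ℂ) * Complex.I) * (e (-1) θ₁ * e 1 θ₂) := by
      rw [e_def, e_def, ← Complex.exp_add, ← Complex.exp_add]; congr 1; push_cast; ring
    have h2 : Complex.exp (((θ₁:ℂ) - (Φ:ℂ) - (θ₂:ℂ)) * Complex.I)
        = Complex.exp (-(Φ:ℂ) * Complex.I) * (e 1 θ₁ * e (-1) θ₂) := by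
      rw [e_def, e_def, ← Complex.exp_add, ← Complex.exp_add]; congr 1; push_cast; ring
    have h3 : Complex.exp (Complex.I * ((m:ℂ) * (θ₁:ℂ))) = e ((m:ℤ)) θ₁ :=
      exp_eq_e (by push_cast; ring)
    have h4 : Complex.exp (Complex.I * (((k-m:ℕ):ℂ) * (θ₂:ℂ))) = e ((k:ℤ)-(m:ℤ)) θ₂ :=
      exp_eq_e (by rw [Nat.cast_sub hmk]; push_cast; ring)
    simp only [Complex.sin]
    rw [h1, h2, h3, h4,
      e_split ((m:ℤ)) (-1) ((m:ℤ)-1) θ₁ (by ring), e_split ((k:ℤ)-(m:ℤ)) 1 ((k:ℤ)-(m:ℤ)+1) θ₂ (by ring),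
      e_split ((m:ℤ)) 1 ((m:ℤ)+1) θ₁ (by ring), e_split ((k:ℤ)-(m:ℤ)) (-1) ((k:ℤ)-(m:ℤ)-1) θ₂ (by ring)]
    simp only [w1, w2]
    ring
  rw [hA, hB, hC]
  ring




lemma hpt (α Φ : ℝ) (k : ℕ) (hk : 2 ≤ k) (a : ℕ → ℂ) (θ₁ θ₂ : ℝ) :
    (starRingEnd ℂ) (psiEven k a θ₁ θ₂) * chiEven α Φ k a θ₁ θ₂ =
      (∑ n ∈ Finset.Icc 1 (k-1), ∑ m ∈ Finset.Icc 0 (k-1),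
        (starRingEnd ℂ) (a n) * (a m * w1 α Φ) * e (-(n:ℤ)-(m:ℤ)-1) θ₁ * e ((n:ℤ)-(m:ℤ)-1) θ₂)
      + (∑ n ∈ Finset.Icc 1 (k-1), ∑ m ∈ Finset.Icc 1 (k-1),
        (starRingEnd ℂ) (a n) * (a m * w2 α Φ) * e (-(n:ℤ)-(m:ℤ)+1) θ₁ * e ((n:ℤ)-(m:ℤ)+1) θ₂)
      + (∑ n ∈ Finset.Icc 1 (k-1), ∑ m ∈ Finset.Icc 1 (k-1),
        (starRingEnd ℂ) (a n) * (a m * w1 α Φ) * e ((m:ℤ)-(n:ℤ)-1) θ₁ * e ((n:ℤ)-(m:ℤ)+1) θ₂)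
      + (∑ n ∈ Finset.Icc 1 (k-1), ∑ m ∈ Finset.Icc 0 (k-1),
        (starRingEnd ℂ) (a n) * (a m * w2 α Φ) * e ((m:ℤ)-(n:ℤ)+1) θ₁ * e ((n:ℤ)-(m:ℤ)-1) θ₂)
      + (∑ n ∈ Finset.Icc 0 (k-1), ∑ m ∈ Finset.Icc 0 (k-1),
        (starRingEnd ℂ) (a n) * (a m * w1 α Φ) * e ((n:ℤ)-(m:ℤ)-1) θ₁ * e ((n:ℤ)-(m:ℤ)-1) θ₂)
      + (∑ n ∈ Finset.Icc 0 (k-1), ∑ m ∈ Finset.Icc 1 (k-1),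
        (starRingEnd ℂ) (a n) * (a m * w2 α Φ) * e ((n:ℤ)-(m:ℤ)+1) θ₁ * e ((n:ℤ)-(m:ℤ)+1) θ₂)
      + (∑ n ∈ Finset.Icc 0 (k-1), ∑ m ∈ Finset.Icc 1 (k-1),
        (starRingEnd ℂ) (a n) * (a m * w1 α Φ) * e ((n:ℤ)+(m:ℤ)-1) θ₁ * e ((n:ℤ)-(m:ℤ)+1) θ₂)
      + (∑ n ∈ Finset.Icc 0 (k-1), ∑ m ∈ Finset.Icc 0 (k-1),
        (starRingEnd ℂ) (a n) * (a m * w2 α Φ) * e ((n:ℤ)+(m:ℤ)+1) θ₁ * e ((n:ℤ)-(m:ℤ)-1) θ₂) := by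
  rw [hY k hk a θ₁ θ₂, hX α Φ k hk a θ₁ θ₂]
  have g1 : (∑ n ∈ Finset.Icc 1 (k-1),
        (starRingEnd ℂ) (a n) * e (-(n:ℤ)) θ₁ * e ((n:ℤ)-(k:ℤ)) θ₂)
      * (∑ m ∈ Finset.Icc 0 (k-1),
        a m * w1 α Φ * e (-(m:ℤ)-1) θ₁ * e ((k:ℤ)-(m:ℤ)-1) θ₂)
      = ∑ n ∈ Finset.Icc 1 (k-1), ∑ m ∈ Finset.Icc 0 (k-1),
        (starRingEnd ℂ) (a n) * (a m * w1 α Φ) * e (-(n:ℤ)-(m:ℤ)-1) θ₁ * e ((n:ℤ)-(m:ℤ)-1) θ₂ := by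
    rw [Finset.sum_mul_sum]
    exact Finset.sum_congr rfl fun n _ => Finset.sum_congr rfl fun m _ =>
      term_mul θ₁ θ₂ (by ring) (by ring)
  have g2 : (∑ n ∈ Finset.Icc 1 (k-1),
        (starRingEnd ℂ) (a n) * e (-(n:ℤ)) θ₁ * e ((n:ℤ)-(k:ℤ)) θ₂)
      * (∑ m ∈ Finset.Icc 1 (k-1),
        a m * w2 α Φ * e (-(m:ℤ)+1) θ₁ * e ((k:ℤ)-(m:ℤ)+1) θ₂)
      = ∑ n ∈ Finset.Icc 1 (k-1), ∑ m ∈ Finset.Icc 1 (k-1),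
        (starRingEnd ℂ) (a n) * (a m * w2 α Φ) * e (-(n:ℤ)-(m:ℤ)+1) θ₁ * e ((n:ℤ)-(m:ℤ)+1) θ₂ := by
    rw [Finset.sum_mul_sum]
    exact Finset.sum_congr rfl fun n _ => Finset.sum_congr rfl fun m _ =>
      term_mul θ₁ θ₂ (by ring) (by ring)
  have g3 : (∑ n ∈ Finset.Icc 1 (k-1),
        (starRingEnd ℂ) (a n) * e (-(n:ℤ)) θ₁ * e ((n:ℤ)-(k:ℤ)) θ₂)
      * (∑ m ∈ Finset.Icc 1 (k-1),
        a m * w1 α Φ * e ((m:ℤ)-1) θ₁ * e ((k:ℤ)-(m:ℤ)+1) θ₂)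
      = ∑ n ∈ Finset.Icc 1 (k-1), ∑ m ∈ Finset.Icc 1 (k-1),
        (starRingEnd ℂ) (a n) * (a m * w1 α Φ) * e ((m:ℤ)-(n:ℤ)-1) θ₁ * e ((n:ℤ)-(m:ℤ)+1) θ₂ := by
    rw [Finset.sum_mul_sum]
    exact Finset.sum_congr rfl fun n _ => Finset.sum_congr rfl fun m _ =>
      term_mul θ₁ θ₂ (by ring) (by ring)
  have g4 : (∑ n ∈ Finset.Icc 1 (k-1),
        (starRingEnd ℂ) (a n) * e (-(n:ℤ)) θ₁ * e ((n:ℤ)-(k:ℤ)) θ₂)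
      * (∑ m ∈ Finset.Icc 0 (k-1),
        a m * w2 α Φ * e ((m:ℤ)+1) θ₁ * e ((k:ℤ)-(m:ℤ)-1) θ₂)
      = ∑ n ∈ Finset.Icc 1 (k-1), ∑ m ∈ Finset.Icc 0 (k-1),
        (starRingEnd ℂ) (a n) * (a m * w2 α Φ) * e ((m:ℤ)-(n:ℤ)+1) θ₁ * e ((n:ℤ)-(m:ℤ)-1) θ₂ := by
    rw [Finset.sum_mul_sum]
    exact Finset.sum_congr rfl fun n _ => Finset.sum_congr rfl fun m _ =>
      term_mul θ₁ θ₂ (by ring) (by ring)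
  have g5 : (∑ n ∈ Finset.Icc 0 (k-1),
        (starRingEnd ℂ) (a n) * e ((n:ℤ)) θ₁ * e ((n:ℤ)-(k:ℤ)) θ₂)
      * (∑ m ∈ Finset.Icc 0 (k-1),
        a m * w1 α Φ * e (-(m:ℤ)-1) θ₁ * e ((k:ℤ)-(m:ℤ)-1) θ₂)
      = ∑ n ∈ Finset.Icc 0 (k-1), ∑ m ∈ Finset.Icc 0 (k-1),
        (starRingEnd ℂ) (a n) * (a m * w1 α Φ) * e ((n:ℤ)-(m:ℤ)-1) θ₁ * e ((n:ℤ)-(m:ℤ)-1) θ₂ := by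
    rw [Finset.sum_mul_sum]
    exact Finset.sum_congr rfl fun n _ => Finset.sum_congr rfl fun m _ =>
      term_mul θ₁ θ₂ (by ring) (by ring)
  have g6 : (∑ n ∈ Finset.Icc 0 (k-1),
        (starRingEnd ℂ) (a n) * e ((n:ℤ)) θ₁ * e ((n:ℤ)-(k:ℤ)) θ₂)
      * (∑ m ∈ Finset.Icc 1 (k-1),
        a m * w2 α Φ * e (-(m:ℤ)+1) θ₁ * e ((k:ℤ)-(m:ℤ)+1) θ₂)
      = ∑ n ∈ Finset.Icc 0 (k-1), ∑ m ∈ Finset.Icc 1 (k-1),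
        (starRingEnd ℂ) (a n) * (a m * w2 α Φ) * e ((n:ℤ)-(m:ℤ)+1) θ₁ * e ((n:ℤ)-(m:ℤ)+1) θ₂ := by
    rw [Finset.sum_mul_sum]
    exact Finset.sum_congr rfl fun n _ => Finset.sum_congr rfl fun m _ =>
      term_mul θ₁ θ₂ (by ring) (by ring)
  have g7 : (∑ n ∈ Finset.Icc 0 (k-1),
        (starRingEnd ℂ) (a n) * e ((n:ℤ)) θ₁ * e ((n:ℤ)-(k:ℤ)) θ₂)
      * (∑ m ∈ Finset.Icc 1 (k-1),
        a m * w1 α Φ * e ((m:ℤ)-1) θ₁ * e ((k:ℤ)-(m:ℤ)+1) θ₂)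
      = ∑ n ∈ Finset.Icc 0 (k-1), ∑ m ∈ Finset.Icc 1 (k-1),
        (starRingEnd ℂ) (a n) * (a m * w1 α Φ) * e ((n:ℤ)+(m:ℤ)-1) θ₁ * e ((n:ℤ)-(m:ℤ)+1) θ₂ := by
    rw [Finset.sum_mul_sum]
    exact Finset.sum_congr rfl fun n _ => Finset.sum_congr rfl fun m _ =>
      term_mul θ₁ θ₂ (by ring) (by ring)
  have g8 : (∑ n ∈ Finset.Icc 0 (k-1),
        (starRingEnd ℂ) (a n) * e ((n:ℤ)) θ₁ * e ((n:ℤ)-(k:ℤ)) θ₂)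
      * (∑ m ∈ Finset.Icc 0 (k-1),
        a m * w2 α Φ * e ((m:ℤ)+1) θ₁ * e ((k:ℤ)-(m:ℤ)-1) θ₂)
      = ∑ n ∈ Finset.Icc 0 (k-1), ∑ m ∈ Finset.Icc 0 (k-1),
        (starRingEnd ℂ) (a n) * (a m * w2 α Φ) * e ((n:ℤ)+(m:ℤ)+1) θ₁ * e ((n:ℤ)-(m:ℤ)-1) θ₂ := by
    rw [Finset.sum_mul_sum]
    exact Finset.sum_congr rfl fun n _ => Finset.sum_congr rfl fun m _ =>
      term_mul θ₁ θ₂ (by ring) (by ring)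
  linear_combination g1 + g2 + g3 + g4 + g5 + g6 + g7 + g8


end S17

/-- sinusoidal phase dependence of the Josephson current on a
standing wave: `⟨ψ, I_{S¹}(Φ)ψ⟩ = −8πα C sin Φ` with
`C = 2π Re Σ_{n=0}^{k−2} conj(a_{n+1}) a_n`. -/
theorem stmt17 (α Φ : ℝ) (k : ℕ) (hk : 2 ≤ k) (a : ℕ → ℂ) :
    (∫ θ₁ in (0 : ℝ)..(2 * Real.pi), ∫ θ₂ in (0 : ℝ)..(2 * Real.pi),
        (starRingEnd ℂ) (psiEven k a θ₁ θ₂) * chiEven α Φ k a θ₁ θ₂)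
      = ((-8 * Real.pi * α *
            (2 * Real.pi *
              (∑ n ∈ Finset.range (k - 1), (starRingEnd ℂ) (a (n + 1)) * a n).re) *
            Real.sin Φ : ℝ) : ℂ) := by
  simp only [S17.hpt α Φ k hk a]
  rw [S17.master8]
  have v1 : (∑ n ∈ Finset.Icc 1 (k-1), ∑ m ∈ Finset.Icc 0 (k-1),
      (starRingEnd ℂ) (a n) * (a m * S17.w1 α Φ)
        * S17.E (-(n:ℤ)-(m:ℤ)-1) * S17.E ((n:ℤ)-(m:ℤ)-1)) = 0 :=
    Finset.sum_eq_zero fun n _ => Finset.sum_eq_zero fun m _ => by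
      rw [S17.E_ne (by omega : (-(n:ℤ)-(m:ℤ)-1) ≠ 0)]; ring
  have v2 : (∑ n ∈ Finset.Icc 1 (k-1), ∑ m ∈ Finset.Icc 1 (k-1),
      (starRingEnd ℂ) (a n) * (a m * S17.w2 α Φ)
        * S17.E (-(n:ℤ)-(m:ℤ)+1) * S17.E ((n:ℤ)-(m:ℤ)+1)) = 0 :=
    Finset.sum_eq_zero fun n hn => Finset.sum_eq_zero fun m hm => by
      simp only [Finset.mem_Icc] at hn hm
      rw [S17.E_ne (by omega : (-(n:ℤ)-(m:ℤ)+1) ≠ 0)]; ring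
  have v8 : (∑ n ∈ Finset.Icc 0 (k-1), ∑ m ∈ Finset.Icc 0 (k-1),
      (starRingEnd ℂ) (a n) * (a m * S17.w2 α Φ)
        * S17.E ((n:ℤ)+(m:ℤ)+1) * S17.E ((n:ℤ)-(m:ℤ)-1)) = 0 :=
    Finset.sum_eq_zero fun n _ => Finset.sum_eq_zero fun m _ => by
      rw [S17.E_ne (by omega : ((n:ℤ)+(m:ℤ)+1) ≠ 0)]; ring
  have v3 : (∑ n ∈ Finset.Icc 1 (k-1), ∑ m ∈ Finset.Icc 1 (k-1),
      (starRingEnd ℂ) (a n) * (a m * S17.w1 α Φ)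
        * S17.E ((m:ℤ)-(n:ℤ)-1) * S17.E ((n:ℤ)-(m:ℤ)+1))
      = ∑ n ∈ Finset.Icc 1 (k-2),
        (starRingEnd ℂ) (a n) * (a (n+1) * S17.w1 α Φ) * S17.E 0 * S17.E 0 := by
    have hstep : ∀ n ∈ Finset.Icc 1 (k-1),
        (∑ m ∈ Finset.Icc 1 (k-1), (starRingEnd ℂ) (a n) * (a m * S17.w1 α Φ)
          * S17.E ((m:ℤ)-(n:ℤ)-1) * S17.E ((n:ℤ)-(m:ℤ)+1))
        = if n ∈ Finset.Icc 1 (k-2) then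
            (starRingEnd ℂ) (a n) * (a (n+1) * S17.w1 α Φ) * S17.E 0 * S17.E 0 else 0 := by
      intro n hn
      have h1 : ∀ m ∈ Finset.Icc 1 (k-1),
          (starRingEnd ℂ) (a n) * (a m * S17.w1 α Φ)
            * S17.E ((m:ℤ)-(n:ℤ)-1) * S17.E ((n:ℤ)-(m:ℤ)+1)
          = if m = n+1 then
              (starRingEnd ℂ) (a n) * (a m * S17.w1 α Φ) * S17.E 0 * S17.E 0 else 0 := by
        intro m hm
        by_cases h : m = n + 1
        · subst h
          rw [if_pos rfl, show ((n+1:ℕ):ℤ)-(n:ℤ)-1 = 0 by push_cast; ring,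
            show (n:ℤ)-((n+1:ℕ):ℤ)+1 = 0 by push_cast; ring]
        · rw [if_neg h, S17.E_ne (by omega : ((m:ℤ)-(n:ℤ)-1) ≠ 0)]; ring
      rw [Finset.sum_congr rfl h1, Finset.sum_ite_eq' (Finset.Icc 1 (k-1)) (n+1)]
      simp only [Finset.mem_Icc] at hn ⊢
      by_cases h2 : n ≤ k - 2
      · rw [if_pos (by omega), if_pos (by omega)]
      · rw [if_neg (by omega), if_neg (by omega)]
    rw [Finset.sum_congr rfl hstep, Finset.sum_ite_mem,
      show Finset.Icc 1 (k-1) ∩ Finset.Icc 1 (k-2) = Finset.Icc 1 (k-2) by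
        ext x; simp [Finset.mem_Icc]; omega]
  have v4 : (∑ n ∈ Finset.Icc 1 (k-1), ∑ m ∈ Finset.Icc 0 (k-1),
      (starRingEnd ℂ) (a n) * (a m * S17.w2 α Φ)
        * S17.E ((m:ℤ)-(n:ℤ)+1) * S17.E ((n:ℤ)-(m:ℤ)-1))
      = ∑ n ∈ Finset.Icc 1 (k-1),
        (starRingEnd ℂ) (a n) * (a (n-1) * S17.w2 α Φ) * S17.E 0 * S17.E 0 := by
    refine Finset.sum_congr rfl fun n hn => ?_
    simp only [Finset.mem_Icc] at hn
    have h1 : ∀ m ∈ Finset.Icc 0 (k-1),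
        (starRingEnd ℂ) (a n) * (a m * S17.w2 α Φ)
          * S17.E ((m:ℤ)-(n:ℤ)+1) * S17.E ((n:ℤ)-(m:ℤ)-1)
        = if m = n-1 then
            (starRingEnd ℂ) (a n) * (a m * S17.w2 α Φ) * S17.E 0 * S17.E 0 else 0 := by
      intro m hm
      by_cases h : m = n - 1
      · subst h
        rw [if_pos rfl, show ((n-1:ℕ):ℤ)-(n:ℤ)+1 = 0 by omega,
          show (n:ℤ)-((n-1:ℕ):ℤ)-1 = 0 by omega]
      · rw [if_neg h, S17.E_ne (by omega : ((m:ℤ)-(n:ℤ)+1) ≠ 0)]; ring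
    rw [Finset.sum_congr rfl h1, Finset.sum_ite_eq' (Finset.Icc 0 (k-1)) (n-1),
      if_pos (by simp only [Finset.mem_Icc]; omega)]
  have v5 : (∑ n ∈ Finset.Icc 0 (k-1), ∑ m ∈ Finset.Icc 0 (k-1),
      (starRingEnd ℂ) (a n) * (a m * S17.w1 α Φ)
        * S17.E ((n:ℤ)-(m:ℤ)-1) * S17.E ((n:ℤ)-(m:ℤ)-1))
      = ∑ n ∈ Finset.Icc 1 (k-1),
        (starRingEnd ℂ) (a n) * (a (n-1) * S17.w1 α Φ) * S17.E 0 * S17.E 0 := by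
    have hstep : ∀ n ∈ Finset.Icc 0 (k-1),
        (∑ m ∈ Finset.Icc 0 (k-1), (starRingEnd ℂ) (a n) * (a m * S17.w1 α Φ)
          * S17.E ((n:ℤ)-(m:ℤ)-1) * S17.E ((n:ℤ)-(m:ℤ)-1))
        = if n = 0 then 0 else
            (starRingEnd ℂ) (a n) * (a (n-1) * S17.w1 α Φ) * S17.E 0 * S17.E 0 := by
      intro n hn
      by_cases h0 : n = 0
      · subst h0
        rw [if_pos rfl]
        exact Finset.sum_eq_zero fun m hm => by
          rw [S17.E_ne (by omega : (((0:ℕ):ℤ)-(m:ℤ)-1) ≠ 0)]; ring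
      · rw [if_neg h0]
        have hge : 1 ≤ n := by omega
        have h1 : ∀ m ∈ Finset.Icc 0 (k-1),
            (starRingEnd ℂ) (a n) * (a m * S17.w1 α Φ)
              * S17.E ((n:ℤ)-(m:ℤ)-1) * S17.E ((n:ℤ)-(m:ℤ)-1)
            = if m = n-1 then
                (starRingEnd ℂ) (a n) * (a m * S17.w1 α Φ) * S17.E 0 * S17.E 0 else 0 := by
          intro m hm
          by_cases h : m = n - 1
          · subst h
            rw [if_pos rfl, show (n:ℤ)-((n-1:ℕ):ℤ)-1 = 0 by omega]
          · rw [if_neg h, S17.E_ne (by omega : ((n:ℤ)-(m:ℤ)-1) ≠ 0)]; ring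
        rw [Finset.sum_congr rfl h1, Finset.sum_ite_eq' (Finset.Icc 0 (k-1)) (n-1),
          if_pos (by simp only [Finset.mem_Icc] at hn ⊢; omega)]
    rw [Finset.sum_congr rfl hstep, S17.guard_sum]
  have v6 : (∑ n ∈ Finset.Icc 0 (k-1), ∑ m ∈ Finset.Icc 1 (k-1),
      (starRingEnd ℂ) (a n) * (a m * S17.w2 α Φ)
        * S17.E ((n:ℤ)-(m:ℤ)+1) * S17.E ((n:ℤ)-(m:ℤ)+1))
      = ∑ n ∈ Finset.Icc 0 (k-2),
        (starRingEnd ℂ) (a n) * (a (n+1) * S17.w2 α Φ) * S17.E 0 * S17.E 0 := by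
    have hstep : ∀ n ∈ Finset.Icc 0 (k-1),
        (∑ m ∈ Finset.Icc 1 (k-1), (starRingEnd ℂ) (a n) * (a m * S17.w2 α Φ)
          * S17.E ((n:ℤ)-(m:ℤ)+1) * S17.E ((n:ℤ)-(m:ℤ)+1))
        = if n ∈ Finset.Icc 0 (k-2) then
            (starRingEnd ℂ) (a n) * (a (n+1) * S17.w2 α Φ) * S17.E 0 * S17.E 0 else 0 := by
      intro n hn
      have h1 : ∀ m ∈ Finset.Icc 1 (k-1),
          (starRingEnd ℂ) (a n) * (a m * S17.w2 α Φ)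
            * S17.E ((n:ℤ)-(m:ℤ)+1) * S17.E ((n:ℤ)-(m:ℤ)+1)
          = if m = n+1 then
              (starRingEnd ℂ) (a n) * (a m * S17.w2 α Φ) * S17.E 0 * S17.E 0 else 0 := by
        intro m hm
        by_cases h : m = n + 1
        · subst h
          rw [if_pos rfl, show (n:ℤ)-((n+1:ℕ):ℤ)+1 = 0 by push_cast; ring]
        · rw [if_neg h, S17.E_ne (by omega : ((n:ℤ)-(m:ℤ)+1) ≠ 0)]; ring
      rw [Finset.sum_congr rfl h1, Finset.sum_ite_eq' (Finset.Icc 1 (k-1)) (n+1)]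
      simp only [Finset.mem_Icc] at hn ⊢
      by_cases h2 : n ≤ k - 2
      · rw [if_pos (by omega), if_pos (by omega)]
      · rw [if_neg (by omega), if_neg (by omega)]
    rw [Finset.sum_congr rfl hstep, Finset.sum_ite_mem,
      show Finset.Icc 0 (k-1) ∩ Finset.Icc 0 (k-2) = Finset.Icc 0 (k-2) by
        ext x; simp [Finset.mem_Icc]; omega]
  have v7 : (∑ n ∈ Finset.Icc 0 (k-1), ∑ m ∈ Finset.Icc 1 (k-1),
      (starRingEnd ℂ) (a n) * (a m * S17.w1 α Φ)
        * S17.E ((n:ℤ)+(m:ℤ)-1) * S17.E ((n:ℤ)-(m:ℤ)+1))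
      = (starRingEnd ℂ) (a 0) * (a 1 * S17.w1 α Φ) * S17.E 0 * S17.E 0 := by
    have hstep : ∀ n ∈ Finset.Icc 0 (k-1),
        (∑ m ∈ Finset.Icc 1 (k-1), (starRingEnd ℂ) (a n) * (a m * S17.w1 α Φ)
          * S17.E ((n:ℤ)+(m:ℤ)-1) * S17.E ((n:ℤ)-(m:ℤ)+1))
        = if n = 0 then
            (starRingEnd ℂ) (a 0) * (a 1 * S17.w1 α Φ) * S17.E 0 * S17.E 0 else 0 := by
      intro n hn
      by_cases h0 : n = 0
      · subst h0
        rw [if_pos rfl]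
        have h1 : ∀ m ∈ Finset.Icc 1 (k-1),
            (starRingEnd ℂ) (a 0) * (a m * S17.w1 α Φ)
              * S17.E (((0:ℕ):ℤ)+(m:ℤ)-1) * S17.E (((0:ℕ):ℤ)-(m:ℤ)+1)
            = if m = 1 then
                (starRingEnd ℂ) (a 0) * (a m * S17.w1 α Φ) * S17.E 0 * S17.E 0 else 0 := by
          intro m hm
          by_cases h : m = 1
          · subst h
            rw [if_pos rfl, show ((0:ℕ):ℤ)+((1:ℕ):ℤ)-1 = 0 by omega,
              show ((0:ℕ):ℤ)-((1:ℕ):ℤ)+1 = 0 by omega]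
          · simp only [Finset.mem_Icc] at hm
            rw [if_neg h, S17.E_ne (by omega : (((0:ℕ):ℤ)+(m:ℤ)-1) ≠ 0)]; ring
        rw [Finset.sum_congr rfl h1, Finset.sum_ite_eq' (Finset.Icc 1 (k-1)) 1,
          if_pos (by simp only [Finset.mem_Icc]; omega)]
      · rw [if_neg h0]
        exact Finset.sum_eq_zero fun m hm => by
          simp only [Finset.mem_Icc] at hm
          rw [S17.E_ne (by omega : ((n:ℤ)+(m:ℤ)-1) ≠ 0)]; ring
    rw [Finset.sum_congr rfl hstep, S17.Icc0ins, Finset.sum_insert (by simp), if_pos rfl,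
      Finset.sum_eq_zero fun n hn =>
        if_neg (by simp only [Finset.mem_Icc] at hn; omega), add_zero]
  rw [v1, v2, v3, v4, v5, v6, v7, v8]
  have hr : Finset.Icc 0 (k-2) = Finset.range (k-1) := by
    ext x; simp [Finset.mem_Icc]; omega
  have c3 : (∑ n ∈ Finset.Icc 1 (k-2),
        (starRingEnd ℂ) (a n) * (a (n+1) * S17.w1 α Φ) * S17.E 0 * S17.E 0)
      + (starRingEnd ℂ) (a 0) * (a 1 * S17.w1 α Φ) * S17.E 0 * S17.E 0
      = (∑ n ∈ Finset.range (k-1), (starRingEnd ℂ) (a n) * a (n+1))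
          * (S17.w1 α Φ * (S17.E 0 * S17.E 0)) := by
    rw [show (∑ n ∈ Finset.range (k-1), (starRingEnd ℂ) (a n) * a (n+1))
          * (S17.w1 α Φ * (S17.E 0 * S17.E 0))
        = ∑ n ∈ Finset.range (k-1),
            (starRingEnd ℂ) (a n) * (a (n+1) * S17.w1 α Φ) * S17.E 0 * S17.E 0 by
      rw [Finset.sum_mul]; exact Finset.sum_congr rfl fun n _ => by ring]
    rw [← hr, S17.Icc0ins, Finset.sum_insert (by simp)]
    simp only [Nat.zero_add]
    ring
  have c4 : (∑ n ∈ Finset.Icc 1 (k-1),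
        (starRingEnd ℂ) (a n) * (a (n-1) * S17.w2 α Φ) * S17.E 0 * S17.E 0)
      = (∑ n ∈ Finset.range (k-1), (starRingEnd ℂ) (a (n+1)) * a n)
          * (S17.w2 α Φ * (S17.E 0 * S17.E 0)) := by
    rw [S17.sum_shift, Finset.sum_mul]
    refine Finset.sum_congr rfl fun n _ => ?_
    simp only [Nat.add_sub_cancel]
    ring
  have c5 : (∑ n ∈ Finset.Icc 1 (k-1),
        (starRingEnd ℂ) (a n) * (a (n-1) * S17.w1 α Φ) * S17.E 0 * S17.E 0)
      = (∑ n ∈ Finset.range (k-1), (starRingEnd ℂ) (a (n+1)) * a n)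
          * (S17.w1 α Φ * (S17.E 0 * S17.E 0)) := by
    rw [S17.sum_shift, Finset.sum_mul]
    refine Finset.sum_congr rfl fun n _ => ?_
    simp only [Nat.add_sub_cancel]
    ring
  have c6 : (∑ n ∈ Finset.Icc 0 (k-2),
        (starRingEnd ℂ) (a n) * (a (n+1) * S17.w2 α Φ) * S17.E 0 * S17.E 0)
      = (∑ n ∈ Finset.range (k-1), (starRingEnd ℂ) (a n) * a (n+1))
          * (S17.w2 α Φ * (S17.E 0 * S17.E 0)) := by
    rw [hr, Finset.sum_mul]
    exact Finset.sum_congr rfl fun n _ => by ring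
  have hB : (∑ n ∈ Finset.range (k-1), (starRingEnd ℂ) (a n) * a (n+1))
      = (starRingEnd ℂ) (∑ n ∈ Finset.range (k-1), (starRingEnd ℂ) (a (n+1)) * a n) := by
    rw [map_sum]
    exact Finset.sum_congr rfl fun n _ => by
      rw [map_mul, Complex.conj_conj]; ring
  have hfin : ((∑ n ∈ Finset.range (k-1), (starRingEnd ℂ) (a (n+1)) * a n)
        + (starRingEnd ℂ) (∑ n ∈ Finset.range (k-1), (starRingEnd ℂ) (a (n+1)) * a n))
      * ((S17.w1 α Φ + S17.w2 α Φ) * (S17.E 0 * S17.E 0))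
      = ((-8 * Real.pi * α *
            (2 * Real.pi *
              (∑ n ∈ Finset.range (k - 1), (starRingEnd ℂ) (a (n + 1)) * a n).re) *
            Real.sin Φ : ℝ) : ℂ) := by
    rw [Complex.add_conj, S17.w_add, S17.E_zero, ← Complex.ofReal_sin]
    push_cast
    ring
  linear_combination c3 + c4 + c5 + c6 + hfin
    + ((S17.w1 α Φ + S17.w2 α Φ) * (S17.E 0 * S17.E 0)) * hB
end
end

section
/- Let α, Φ ∈ ℝ, let k ≥ 3 be an integer, and let a₀, a₁, …, a_{k−2} ∈ ℂ. Define the one-mode shifted standing wave ψ(θ₁,θ₂) = Σ_{n=0}^{k−2} a_n (e^{inθ₁} + e^{−i(n+1)θ₁}) e^{−i(k−n)θ₂} and the function χ_Φ(θ₁,θ₂) = 2α [ sin(θ₁−Φ+θ₂) Σ_{n=0}^{k−2} a_n e^{inθ₁} e^{−i(k−n)θ₂} + sin(θ₁−Φ−θ₂) Σ_{n=0}^{k−2} a_n e^{−i(n+1)θ₁} e^{−i(k−n)θ₂} ]. Then ∫₀^{2π}∫₀^{2π} conj(ψ(θ₁,θ₂)) · χ_Φ(θ₁,θ₂) dθ₁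 dθ₂ = −8πα C sin Φ, where C = 2π · Re( Σ_{n=0}^{k−3} conj(a_{n+1}) a_n ). -/
noncomputable section

namespace Stmt18Aux

open Complex Finset

def E (j : ℤ) (θ : ℝ) : ℂ := Complex.exp (Complex.I * (j : ℂ) * (θ : ℂ))

lemma E_cont (j : ℤ) : Continuous (E j) := by unfold E; fun_prop

lemma Emul (j l : ℤ) (θ : ℝ) : E j θ * E l θ = E (j + l) θ := by
  rw [E, E, E, ← Complex.exp_add]; congr 1; push_cast; ring

lemma intE (j : ℤ) : (∫ θ in (0:ℝ)..(2*Real.pi), E j θ)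
    = if j = 0 then ((2*Real.pi : ℝ) : ℂ) else 0 := by
  rcases eq_or_ne j 0 with h | h
  · simp [E, h, intervalIntegral.integral_const, sub_zero]
  · rw [if_neg h]
    have hc : Complex.I * (j:ℂ) ≠ 0 := by
      apply mul_ne_zero Complex.I_ne_zero
      exact_mod_cast h
    rw [show (∫ θ in (0:ℝ)..(2*Real.pi), E j θ)
        = ∫ θ in (0:ℝ)..(2*Real.pi), Complex.exp ((Complex.I * (j:ℂ)) * (θ:ℂ)) from rfl,
      integral_exp_mul_complex hc]
    have h1 : (Complex.I * (j:ℂ)) * ((2*Real.pi : ℝ) : ℂ) = (j:ℂ) * (2 * Real.pi * Complex.I) := by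
      push_cast; ring
    rw [h1, Complex.exp_int_mul_two_pi_mul_I]
    simp

lemma intE_mul (c : ℂ) (j : ℤ) : (∫ θ in (0:ℝ)..(2*Real.pi), c * E j θ)
    = c * if j = 0 then ((2*Real.pi : ℝ) : ℂ) else 0 := by
  rw [intervalIntegral.integral_const_mul, intE]

lemma dint_sum {ι : Type} (s : Finset ι) (c : ι → ℂ) (A B : ι → ℤ) :
    (∫ θ₁ in (0:ℝ)..(2*Real.pi), ∫ θ₂ in (0:ℝ)..(2*Real.pi),
        ∑ i ∈ s, c i * E (A i) θ₁ * E (B i) θ₂)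
    = ∑ i ∈ s, if A i = 0 ∧ B i = 0 then c i * (2*Real.pi)^2 else 0 := by
  have h1 : ∀ θ₁ : ℝ, (∫ θ₂ in (0:ℝ)..(2*Real.pi), ∑ i ∈ s, c i * E (A i) θ₁ * E (B i) θ₂)
      = ∑ i ∈ s, c i * E (A i) θ₁ * (if B i = 0 then ((2*Real.pi:ℝ):ℂ) else 0) := by
    intro θ₁
    rw [intervalIntegral.integral_finset_sum]
    · exact Finset.sum_congr rfl fun i _ => intE_mul _ _
    · intro i _
      exact (continuous_const.mul (E_cont (B i))).intervalIntegrable _ _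
  simp only [h1]
  rw [intervalIntegral.integral_finset_sum]
  · refine Finset.sum_congr rfl fun i _ => ?_
    rw [intervalIntegral.integral_mul_const, intervalIntegral.integral_const_mul, intE]
    by_cases hA : A i = 0 <;> by_cases hB : B i = 0 <;> simp [hA, hB] <;> ring
  · intro i _
    exact ((continuous_const.mul (E_cont (A i))).mul continuous_const).intervalIntegrable _ _

lemma cj1E (m : ℕ) (θ : ℝ) : (starRingEnd ℂ) (Complex.exp (Complex.I * ((m:ℂ) * θ)))
    = E (-(m:ℤ)) θ := by
  rw [← Complex.exp_conj, E]
  congr 1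
  simp [map_mul, Complex.conj_I, Complex.conj_ofReal]
  ring

lemma cj2E (m : ℕ) (θ : ℝ) : (starRingEnd ℂ) (Complex.exp (-(Complex.I * (((m:ℂ)+1) * θ))))
    = E ((m:ℤ)+1) θ := by
  rw [← Complex.exp_conj, E]
  congr 1
  simp [map_mul, Complex.conj_I, Complex.conj_ofReal]
  ring

lemma cj3E (m : ℕ) (θ : ℝ) : (starRingEnd ℂ) (Complex.exp (-(Complex.I * ((m:ℂ) * θ))))
    = E ((m:ℤ)) θ := by
  rw [← Complex.exp_conj, E]
  congr 1
  simp [map_mul, Complex.conj_I, Complex.conj_ofReal]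
  ring

lemma hcv1E (n : ℕ) (θ : ℝ) :
    Complex.exp (Complex.I * ((n:ℂ) * θ)) = E (n:ℤ) θ := by
  rw [E]; congr 1; push_cast; ring

lemma hcv2E (n : ℕ) (θ : ℝ) :
    Complex.exp (-(Complex.I * (((n:ℂ)+1) * θ))) = E (-(n:ℤ)-1) θ := by
  rw [E]; congr 1; push_cast; ring

lemma hcv3E (n : ℕ) (θ : ℝ) :
    Complex.exp (-(Complex.I * ((n:ℂ) * θ))) = E (-(n:ℤ)) θ := by
  rw [E]; congr 1; push_cast; ring

lemma sin1E (x p y : ℝ) : Complex.sin ((x:ℂ) - p + y)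
    = (-Complex.I/2) * (Complex.exp (-(Complex.I*p)) * E 1 x * E 1 y
        - Complex.exp (Complex.I*p) * E (-1) x * E (-1) y) := by
  rw [Complex.sin, E, E, E, E,
    show (-((x:ℂ) - p + y))*Complex.I = (Complex.I*p) + (Complex.I * ((-1:ℤ):ℂ) * x + Complex.I * ((-1:ℤ):ℂ) * y) from by push_cast; ring,
    show (((x:ℂ) - p + y))*Complex.I = (-(Complex.I*p)) + (Complex.I * ((1:ℤ):ℂ) * x + Complex.I * ((1:ℤ):ℂ) * y) from by push_cast; ring,
    Complex.exp_add, Complex.exp_add, Complex.exp_add, Complex.exp_add]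
  ring

lemma sin2E (x p y : ℝ) : Complex.sin ((x:ℂ) - p - y)
    = (-Complex.I/2) * (Complex.exp (-(Complex.I*p)) * E 1 x * E (-1) y
        - Complex.exp (Complex.I*p) * E (-1) x * E 1 y) := by
  rw [Complex.sin, E, E, E, E,
    show (-((x:ℂ) - p - y))*Complex.I = (Complex.I*p) + (Complex.I * ((-1:ℤ):ℂ) * x + Complex.I * ((1:ℤ):ℂ) * y) from by push_cast; ring,
    show (((x:ℂ) - p - y))*Complex.I = (-(Complex.I*p)) + (Complex.I * ((1:ℤ):ℂ) * x + Complex.I * ((-1:ℤ):ℂ) * y) from by push_cast; ring,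
    Complex.exp_add, Complex.exp_add, Complex.exp_add, Complex.exp_add]
  ring

def Aj (m n : ℕ) : ℕ → ℤ
  | 0 => -(m:ℤ) + 1 + (n:ℤ)
  | 1 => -(m:ℤ) + -1 + (n:ℤ)
  | 2 => -(m:ℤ) + 1 + (-(n:ℤ)-1)
  | 3 => -(m:ℤ) + -1 + (-(n:ℤ)-1)
  | 4 => (m:ℤ)+1 + 1 + (n:ℤ)
  | 5 => (m:ℤ)+1 + -1 + (n:ℤ)
  | 6 => (m:ℤ)+1 + 1 + (-(n:ℤ)-1)
  | _ => (m:ℤ)+1 + -1 + (-(n:ℤ)-1)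

def Bj (k m n : ℕ) : ℕ → ℤ
  | 0 => (k:ℤ)-(m:ℤ) + 1 + ((n:ℤ)-(k:ℤ))
  | 1 => (k:ℤ)-(m:ℤ) + -1 + ((n:ℤ)-(k:ℤ))
  | 2 => (k:ℤ)-(m:ℤ) + -1 + ((n:ℤ)-(k:ℤ))
  | 3 => (k:ℤ)-(m:ℤ) + 1 + ((n:ℤ)-(k:ℤ))
  | 4 => (k:ℤ)-(m:ℤ) + 1 + ((n:ℤ)-(k:ℤ))
  | 5 => (k:ℤ)-(m:ℤ) + -1 + ((n:ℤ)-(k:ℤ))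
  | 6 => (k:ℤ)-(m:ℤ) + -1 + ((n:ℤ)-(k:ℤ))
  | _ => (k:ℤ)-(m:ℤ) + 1 + ((n:ℤ)-(k:ℤ))

def Cj (α Φ : ℝ) (a : ℕ → ℂ) (m n : ℕ) : ℕ → ℂ := fun j =>
  (-Complex.I) * (α:ℂ) * (starRingEnd ℂ) (a m) * a n *
    (if j % 2 = 0 then Complex.exp (-(Complex.I * (Φ:ℂ))) else -Complex.exp (Complex.I * (Φ:ℂ)))

set_option maxHeartbeats 1000000 in
lemma core (α Φ : ℝ) (a : ℕ → ℂ) (k m n : ℕ) (hm : m ≤ k) (hn : n ≤ k) (θ₁ θ₂ : ℝ) :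
    (starRingEnd ℂ) (a m
        * (Complex.exp (Complex.I * ((m : ℂ) * (θ₁ : ℂ)))
            + Complex.exp (-(Complex.I * (((m : ℂ) + 1) * (θ₁ : ℂ)))))
        * Complex.exp (-(Complex.I * (((k - m : ℕ) : ℂ) * (θ₂ : ℂ)))))
    * (2 * (α : ℂ) *
        (Complex.sin ((θ₁ : ℂ) - (Φ : ℂ) + (θ₂ : ℂ))
            * (a n * Complex.exp (Complex.I * ((n : ℂ) * (θ₁ : ℂ)))
                * Complex.exp (-(Complex.I * (((k - n : ℕ) : ℂ) * (θ₂ : ℂ)))))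
          + Complex.sin ((θ₁ : ℂ) - (Φ : ℂ) - (θ₂ : ℂ))
            * (a n * Complex.exp (-(Complex.I * (((n : ℂ) + 1) * (θ₁ : ℂ))))
                * Complex.exp (-(Complex.I * (((k - n : ℕ) : ℂ) * (θ₂ : ℂ)))))))
    = ∑ j ∈ Finset.range 8, Cj α Φ a m n j * E (Aj m n j) θ₁ * E (Bj k m n j) θ₂ := by
  rw [map_mul, map_mul, map_add, cj1E, cj2E, cj3E, sin1E, sin2E, hcv1E, hcv2E]
  simp only [hcv3E]
  rw [Nat.cast_sub hm, Nat.cast_sub hn]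
  simp only [Finset.sum_range_succ, Finset.sum_range_zero, Aj, Bj, Cj]
  norm_num
  set cP : ℂ := Complex.exp (-(Complex.I * (Φ:ℂ))) with hcP
  set cM : ℂ := Complex.exp (Complex.I * (Φ:ℂ)) with hcM
  have expand :
      (starRingEnd ℂ) (a m) * (E (-(m:ℤ)) θ₁ + E ((m:ℤ)+1) θ₁) * E ((k:ℤ)-(m:ℤ)) θ₂
      * (2 * (α : ℂ) *
          ((-Complex.I/2) * (cP * E 1 θ₁ * E 1 θ₂ - cM * E (-1) θ₁ * E (-1) θ₂)
              * (a n * E ((n:ℤ)) θ₁ * E ((n:ℤ)-(k:ℤ)) θ₂)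
            + (-Complex.I/2) * (cP * E 1 θ₁ * E (-1) θ₂ - cM * E (-1) θ₁ * E 1 θ₂)
              * (a n * E (-(n:ℤ)-1) θ₁ * E ((n:ℤ)-(k:ℤ)) θ₂)))
      = ((-Complex.I) * (α:ℂ) * (starRingEnd ℂ) (a m) * a n) *
          ( cP * ((E (-(m:ℤ)) θ₁ * E 1 θ₁ * E ((n:ℤ)) θ₁) * (E ((k:ℤ)-(m:ℤ)) θ₂ * E 1 θ₂ * E ((n:ℤ)-(k:ℤ)) θ₂))
          - cM * ((E (-(m:ℤ)) θ₁ * E (-1) θ₁ * E ((n:ℤ)) θ₁) * (E ((k:ℤ)-(m:ℤ)) θ₂ * E (-1) θ₂ * E ((n:ℤ)-(k:ℤ)) θ₂))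
          + cP * ((E (-(m:ℤ)) θ₁ * E 1 θ₁ * E (-(n:ℤ)-1) θ₁) * (E ((k:ℤ)-(m:ℤ)) θ₂ * E (-1) θ₂ * E ((n:ℤ)-(k:ℤ)) θ₂))
          - cM * ((E (-(m:ℤ)) θ₁ * E (-1) θ₁ * E (-(n:ℤ)-1) θ₁) * (E ((k:ℤ)-(m:ℤ)) θ₂ * E 1 θ₂ * E ((n:ℤ)-(k:ℤ)) θ₂))
          + cP * ((E ((m:ℤ)+1) θ₁ * E 1 θ₁ * E ((n:ℤ)) θ₁) * (E ((k:ℤ)-(m:ℤ)) θ₂ * E 1 θ₂ * E ((n:ℤ)-(k:ℤ)) θ₂))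
          - cM * ((E ((m:ℤ)+1) θ₁ * E (-1) θ₁ * E ((n:ℤ)) θ₁) * (E ((k:ℤ)-(m:ℤ)) θ₂ * E (-1) θ₂ * E ((n:ℤ)-(k:ℤ)) θ₂))
          + cP * ((E ((m:ℤ)+1) θ₁ * E 1 θ₁ * E (-(n:ℤ)-1) θ₁) * (E ((k:ℤ)-(m:ℤ)) θ₂ * E (-1) θ₂ * E ((n:ℤ)-(k:ℤ)) θ₂))
          - cM * ((E ((m:ℤ)+1) θ₁ * E (-1) θ₁ * E (-(n:ℤ)-1) θ₁) * (E ((k:ℤ)-(m:ℤ)) θ₂ * E 1 θ₂ * E ((n:ℤ)-(k:ℤ)) θ₂))) := by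
    ring
  rw [expand]
  simp only [Emul]
  norm_num
  ring

end Stmt18Aux

namespace Stmt18Aux

lemma hpt (α Φ : ℝ) (k : ℕ) (hk : 3 ≤ k) (a : ℕ → ℂ) (θ₁ θ₂ : ℝ) :
    (starRingEnd ℂ) (psiOdd k a θ₁ θ₂) * chiOdd α Φ k a θ₁ θ₂
    = ∑ p ∈ ((Finset.range (k-1) ×ˢ Finset.range (k-1)) ×ˢ Finset.range 8),
        Cj α Φ a p.1.1 p.1.2 p.2 * E (Aj p.1.1 p.1.2 p.2) θ₁ * E (Bj k p.1.1 p.1.2 p.2) θ₂ := by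
  rw [Finset.sum_product, Finset.sum_product]
  have hchi : chiOdd α Φ k a θ₁ θ₂
      = ∑ n ∈ Finset.range (k-1), 2 * (α : ℂ) *
          (Complex.sin ((θ₁ : ℂ) - (Φ : ℂ) + (θ₂ : ℂ))
              * (a n * Complex.exp (Complex.I * ((n : ℂ) * (θ₁ : ℂ)))
                  * Complex.exp (-(Complex.I * (((k - n : ℕ) : ℂ) * (θ₂ : ℂ)))))
            + Complex.sin ((θ₁ : ℂ) - (Φ : ℂ) - (θ₂ : ℂ))
              * (a n * Complex.exp (-(Complex.I * (((n : ℂ) + 1) * (θ₁ : ℂ))))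
                  * Complex.exp (-(Complex.I * (((k - n : ℕ) : ℂ) * (θ₂ : ℂ)))))) := by
    rw [chiOdd, Finset.mul_sum, Finset.mul_sum, ← Finset.sum_add_distrib, Finset.mul_sum]
  rw [hchi, psiOdd, map_sum, Finset.sum_mul_sum]
  refine Finset.sum_congr rfl fun m hm => Finset.sum_congr rfl fun n hn => ?_
  have hm' : m ≤ k := by have := Finset.mem_range.mp hm; omega
  have hn' : n ≤ k := by have := Finset.mem_range.mp hn; omega
  exact core α Φ a k m n hm' hn' θ₁ θ₂

end Stmt18Aux

namespace Stmt18Aux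

set_option maxRecDepth 4000 in
lemma key8 (α Φ : ℝ) (a : ℕ → ℂ) (k m n : ℕ) :
    (∑ j ∈ Finset.range 8, if Aj m n j = 0 ∧ Bj k m n j = 0 then Cj α Φ a m n j * (2*Real.pi)^2 else 0)
    = (if n = m + 1 then
        ((-Complex.I) * (α:ℂ) * (Complex.exp (-(Complex.I * (Φ:ℂ))) - Complex.exp (Complex.I * (Φ:ℂ))) * (2*Real.pi)^2)
          * ((starRingEnd ℂ) (a m) * a n) else 0)
    + (if m = n + 1 then
        ((-Complex.I) * (α:ℂ) * (Complex.exp (-(Complex.I * (Φ:ℂ))) - Complex.exp (Complex.I * (Φ:ℂ))) * (2*Real.pi)^2)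
          * ((starRingEnd ℂ) (a m) * a n) else 0) := by
  have e0 : (Aj m n 0 = 0 ∧ Bj k m n 0 = 0) ↔ m = n + 1 := by simp [Aj, Bj]; omega
  have e1 : (Aj m n 1 = 0 ∧ Bj k m n 1 = 0) ↔ n = m + 1 := by simp [Aj, Bj]; omega
  have e2 : (Aj m n 2 = 0 ∧ Bj k m n 2 = 0) ↔ False := by simp [Aj, Bj]; omega
  have e3 : (Aj m n 3 = 0 ∧ Bj k m n 3 = 0) ↔ False := by simp [Aj, Bj]; omega
  have e4 : (Aj m n 4 = 0 ∧ Bj k m n 4 = 0) ↔ False := by simp [Aj, Bj]; omega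
  have e5 : (Aj m n 5 = 0 ∧ Bj k m n 5 = 0) ↔ False := by simp [Aj, Bj]; omega
  have e6 : (Aj m n 6 = 0 ∧ Bj k m n 6 = 0) ↔ n = m + 1 := by simp [Aj, Bj]; omega
  have e7 : (Aj m n 7 = 0 ∧ Bj k m n 7 = 0) ↔ m = n + 1 := by simp [Aj, Bj]; omega
  rw [Finset.sum_range_succ, Finset.sum_range_succ, Finset.sum_range_succ, Finset.sum_range_succ,
    Finset.sum_range_succ, Finset.sum_range_succ, Finset.sum_range_succ, Finset.sum_range_succ,
    Finset.sum_range_zero]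
  simp only [e0, e1, e2, e3, e4, e5, e6, e7, if_false, Cj]
  norm_num
  by_cases h1 : n = m + 1
  · have h2 : ¬ m = n + 1 := by omega
    simp [h1, h2]
    try split_ifs with h3
    any_goals ring
    all_goals exact absurd h3 (by omega)
  · by_cases h2 : m = n + 1
    · simp [h1, h2]
      try split_ifs with h3
      any_goals ring
      all_goals exact absurd h3 (by omega)
    · simp [h1, h2]

end Stmt18Aux

namespace Stmt18Aux

theorem stmt18' (α Φ : ℝ) (k : ℕ) (hk : 3 ≤ k) (a : ℕ → ℂ) :
    (∫ θ₁ in (0 : ℝ)..(2 * Real.pi), ∫ θ₂ in (0 : ℝ)..(2 * Real.pi),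
        (starRingEnd ℂ) (psiOdd k a θ₁ θ₂) * chiOdd α Φ k a θ₁ θ₂)
      = ((-8 * Real.pi * α *
            (2 * Real.pi *
              (∑ n ∈ Finset.range (k - 2), (starRingEnd ℂ) (a (n + 1)) * a n).re) *
            Real.sin Φ : ℝ) : ℂ) := by
  have hpt' := hpt α Φ k hk a
  simp only [hpt']
  rw [dint_sum]
  rw [Finset.sum_product, Finset.sum_product]
  rw [Finset.sum_congr rfl (fun m _ => Finset.sum_congr rfl (fun n _ => key8 α Φ a k m n))]
  set D : ℂ := (-Complex.I) * (α:ℂ)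
      * (Complex.exp (-(Complex.I * (Φ:ℂ))) - Complex.exp (Complex.I * (Φ:ℂ))) * (2*Real.pi)^2 with hDdef
  simp only [Finset.sum_add_distrib]
  have trunc : ∀ (g : ℕ → ℂ), (∑ m ∈ Finset.range (k-1), if m+1 ∈ Finset.range (k-1) then g m else 0)
      = ∑ m ∈ Finset.range (k-2), g m := by
    intro g
    rw [show k - 1 = (k-2) + 1 from by omega, Finset.sum_range_succ,
      if_neg (by simp [Finset.mem_range])]
    rw [add_zero]
    refine Finset.sum_congr rfl fun m hm => ?_
    rw [if_pos]
    have := Finset.mem_range.mp hm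
    simp [Finset.mem_range]; omega
  have p1 : (∑ m ∈ Finset.range (k-1), ∑ n ∈ Finset.range (k-1),
      (if n = m + 1 then D * ((starRingEnd ℂ) (a m) * a n) else 0))
      = ∑ m ∈ Finset.range (k-2), D * ((starRingEnd ℂ) (a m) * a (m+1)) := by
    rw [Finset.sum_congr rfl (fun m _ => Finset.sum_ite_eq' (Finset.range (k-1)) (m+1)
        (fun n => D * ((starRingEnd ℂ) (a m) * a n)))]
    exact trunc _
  have p2 : (∑ m ∈ Finset.range (k-1), ∑ n ∈ Finset.range (k-1),
      (if m = n + 1 then D * ((starRingEnd ℂ) (a m) * a n) else 0))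
      = ∑ n ∈ Finset.range (k-2), D * ((starRingEnd ℂ) (a (n+1)) * a n) := by
    rw [Finset.sum_comm]
    rw [Finset.sum_congr rfl (fun n _ => Finset.sum_ite_eq' (Finset.range (k-1)) (n+1)
        (fun m => D * ((starRingEnd ℂ) (a m) * a n)))]
    exact trunc _
  rw [p1, p2, ← Finset.sum_add_distrib]
  have p3 : (∑ m ∈ Finset.range (k-2),
      (D * ((starRingEnd ℂ) (a m) * a (m+1)) + D * ((starRingEnd ℂ) (a (m+1)) * a m)))
      = D * ((2 * (∑ n ∈ Finset.range (k - 2), (starRingEnd ℂ) (a (n + 1)) * a n).re : ℝ) : ℂ) := by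
    have step : ∀ m : ℕ, D * ((starRingEnd ℂ) (a m) * a (m+1)) + D * ((starRingEnd ℂ) (a (m+1)) * a m)
        = D * ((2 * (((starRingEnd ℂ) (a (m+1)) * a m).re) : ℝ) : ℂ) := by
      intro m
      have h := Complex.add_conj ((starRingEnd ℂ) (a (m+1)) * a m)
      rw [map_mul, Complex.conj_conj] at h
      rw [← h]; ring
    simp only [step]
    rw [← Finset.mul_sum]
    congr 1
    rw [Complex.re_sum]
    push_cast
    rw [Finset.mul_sum]
  rw [p3]
  have hD : Complex.exp (-(Complex.I*(Φ:ℂ))) - Complex.exp (Complex.I*(Φ:ℂ))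
      = -2 * Complex.I * ((Real.sin Φ : ℝ) : ℂ) := by
    rw [show -(Complex.I*(Φ:ℂ)) = ((-Φ : ℝ):ℂ) * Complex.I from by push_cast; ring,
        show (Complex.I*(Φ:ℂ)) = ((Φ:ℝ):ℂ) * Complex.I from by ring,
        Complex.exp_mul_I, Complex.exp_mul_I]
    push_cast
    simp [Complex.cos_neg, Complex.sin_neg]
    ring
  rw [hDdef, hD]
  push_cast
  ring_nf
  rw [Complex.I_sq]
  ring

end Stmt18Aux


/-- sinusoidal phase dependence of the Josephson current on a
one-mode shifted standing wave: `⟨ψ, I_{S¹}(Φ)ψ⟩ = −8πα C sin Φ` with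
`C = 2π Re Σ_{n=0}^{k−3} conj(a_{n+1}) a_n`. -/
theorem stmt18 (α Φ : ℝ) (k : ℕ) (hk : 3 ≤ k) (a : ℕ → ℂ) :
    (∫ θ₁ in (0 : ℝ)..(2 * Real.pi), ∫ θ₂ in (0 : ℝ)..(2 * Real.pi),
        (starRingEnd ℂ) (psiOdd k a θ₁ θ₂) * chiOdd α Φ k a θ₁ θ₂)
      = ((-8 * Real.pi * α *
            (2 * Real.pi *
              (∑ n ∈ Finset.range (k - 2), (starRingEnd ℂ) (a (n + 1)) * a n).re) *
            Real.sin Φ : ℝ) : ℂ) := by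
  exact Stmt18Aux.stmt18' α Φ k hk a
end
end

section
/- Vanishing of the Fraunhofer pattern: let α ∈ ℝ and Ψ ∈ ℝ, and for Φ ∈ ℝ define B(Φ) = ∫₀^{2π}∫₀^{2π} conj(ψ(θ₁,θ₂)) · χ_Φ(θ₁,θ₂) dθ₁ dθ₂, where either (standing wave case) k ≥ 2, a₀,…,a_{k−1} ∈ ℂ, ψ(θ₁,θ₂) = Σ_{n=1}^{k−1} a_n (e^{inθ₁}+e^{−inθ₁}) e^{i(k−n)θ₂} + a₀ e^{ikθ₂} and χ_Φ(θ₁,θ₂) = 2α[ sin(θ₁−Φ) a₀ e^{i(k−1)θ₂} + sin(θ₁−Φ+θ₂) Σ_{n=1}^{k−1} a_n e^{−inθ₁} e^{i(k−n)θ₂} + sin(θ₁−Φ−θ₂) Σ_{n=1}^{k−1} a_n e^{inθ₁} e^{i(k−n)θ₂} ], or (one-mode shifted case) k ≥ 3, a₀,…,a_{k−2} ∈ ℂ, ψ(θ₁,θ₂) = Σ_{n=0}^{k−2} a_n (e^{inθ₁}+e^{−i(n+1)θ₁}) e^{−i(k−n)θ₂} and χ_Φ(θ₁,θ₂) = 2α[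 sin(θ₁−Φ+θ₂) Σ_{n=0}^{k−2} a_n e^{inθ₁} e^{−i(k−n)θ₂} + sin(θ₁−Φ−θ₂) Σ_{n=0}^{k−2} a_n e^{−i(n+1)θ₁} e^{−i(k−n)θ₂} ]. Then the total Josephson current vanishes: ∫_{−1/2}^{1/2} B(Ψx) dx = 0. -/
noncomputable section

open intervalIntegral in
private lemma machine (Ψ : ℝ) (F₁ F₂ : ℝ → ℝ → ℂ) (G : ℝ → ℝ → ℝ → ℂ)
    (h₁ : Continuous (Function.uncurry F₁)) (h₂ : Continuous (Function.uncurry F₂))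
    (hdec : ∀ Φ θ₁ θ₂ : ℝ, G Φ θ₁ θ₂ =
      Complex.cos (Φ : ℂ) * F₁ θ₁ θ₂ - Complex.sin (Φ : ℂ) * F₂ θ₁ θ₂)
    (hrefl : ∀ θ₁ θ₂ : ℝ, F₁ (2 * Real.pi - θ₁) θ₂ = -F₁ θ₁ θ₂) :
    (∫ x in (-(1 / 2) : ℝ)..(1 / 2 : ℝ),
      ∫ θ₁ in (0 : ℝ)..(2 * Real.pi), ∫ θ₂ in (0 : ℝ)..(2 * Real.pi),
        G (Ψ * x) θ₁ θ₂) = 0 := by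
  set g₁ : ℝ → ℂ := fun θ₁ => ∫ θ₂ in (0 : ℝ)..(2 * Real.pi), F₁ θ₁ θ₂ with hg₁def
  set g₂ : ℝ → ℂ := fun θ₁ => ∫ θ₂ in (0 : ℝ)..(2 * Real.pi), F₂ θ₁ θ₂ with hg₂def
  have hg₁c : Continuous g₁ := by
    exact intervalIntegral.continuous_parametric_intervalIntegral_of_continuous' h₁ 0 (2 * Real.pi)
  have hg₂c : Continuous g₂ := by
    exact intervalIntegral.continuous_parametric_intervalIntegral_of_continuous' h₂ 0 (2 * Real.pi)
  set D₁ : ℂ := ∫ θ₁ in (0 : ℝ)..(2 * Real.pi), g₁ θ₁ with hD₁def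
  set D₂ : ℂ := ∫ θ₁ in (0 : ℝ)..(2 * Real.pi), g₂ θ₁ with hD₂def
  have hD₁ : D₁ = 0 := by
    have e2 : ∀ θ₁, g₁ (2 * Real.pi - θ₁) = -g₁ θ₁ := by
      intro θ₁
      rw [hg₁def]
      simp only
      rw [← intervalIntegral.integral_neg]
      exact intervalIntegral.integral_congr fun θ₂ _ => hrefl θ₁ θ₂
    have e0 := intervalIntegral.integral_comp_sub_left (a := (0:ℝ)) (b := 2 * Real.pi) g₁
      (2 * Real.pi)
    simp only [sub_self, sub_zero] at e0
    have e1 : D₁ = -D₁ := by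
      conv_lhs => rw [hD₁def, ← e0]
      calc (∫ θ₁ in (0:ℝ)..(2 * Real.pi), g₁ (2 * Real.pi - θ₁))
          = ∫ θ₁ in (0:ℝ)..(2 * Real.pi), -g₁ θ₁ :=
            intervalIntegral.integral_congr fun θ₁ _ => e2 θ₁
        _ = -D₁ := by rw [intervalIntegral.integral_neg]
    have h2 : (2 : ℂ) * D₁ = 0 := by linear_combination e1
    simpa using h2
  have key : ∀ Φ : ℝ, (∫ θ₁ in (0 : ℝ)..(2 * Real.pi), ∫ θ₂ in (0 : ℝ)..(2 * Real.pi),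
      G Φ θ₁ θ₂) = Complex.cos (Φ : ℂ) * D₁ - Complex.sin (Φ : ℂ) * D₂ := by
    intro Φ
    have c₁ : ∀ θ₁ : ℝ, Continuous fun θ₂ => F₁ θ₁ θ₂ := fun θ₁ =>
      h₁.comp (continuous_const.prodMk continuous_id)
    have c₂ : ∀ θ₁ : ℝ, Continuous fun θ₂ => F₂ θ₁ θ₂ := fun θ₁ =>
      h₂.comp (continuous_const.prodMk continuous_id)
    have inner : ∀ θ₁ : ℝ, (∫ θ₂ in (0 : ℝ)..(2 * Real.pi), G Φ θ₁ θ₂)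
        = Complex.cos (Φ : ℂ) * g₁ θ₁ - Complex.sin (Φ : ℂ) * g₂ θ₁ := by
      intro θ₁
      rw [intervalIntegral.integral_congr
          (g := fun θ₂ => Complex.cos (Φ : ℂ) * F₁ θ₁ θ₂ - Complex.sin (Φ : ℂ) * F₂ θ₁ θ₂)
          (fun θ₂ _ => hdec Φ θ₁ θ₂),
        intervalIntegral.integral_sub ((show Continuous fun θ₂ => Complex.cos (Φ : ℂ) * F₁ θ₁ θ₂ from continuous_const.mul (c₁ θ₁)).intervalIntegrable _ _)
          ((show Continuous fun θ₂ => Complex.sin (Φ : ℂ) * F₂ θ₁ θ₂ from continuous_const.mul (c₂ θ₁)).intervalIntegrable _ _),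
        intervalIntegral.integral_const_mul, intervalIntegral.integral_const_mul]
    calc (∫ θ₁ in (0 : ℝ)..(2 * Real.pi), ∫ θ₂ in (0 : ℝ)..(2 * Real.pi), G Φ θ₁ θ₂)
        = ∫ θ₁ in (0 : ℝ)..(2 * Real.pi),
            (Complex.cos (Φ : ℂ) * g₁ θ₁ - Complex.sin (Φ : ℂ) * g₂ θ₁) :=
          intervalIntegral.integral_congr fun θ₁ _ => inner θ₁
      _ = Complex.cos (Φ : ℂ) * D₁ - Complex.sin (Φ : ℂ) * D₂ := by
          rw [intervalIntegral.integral_sub ((show Continuous fun θ₁ => Complex.cos (Φ : ℂ) * g₁ θ₁ from continuous_const.mul hg₁c).intervalIntegrable _ _)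
              ((show Continuous fun θ₁ => Complex.sin (Φ : ℂ) * g₂ θ₁ from continuous_const.mul hg₂c).intervalIntegrable _ _),
            intervalIntegral.integral_const_mul, intervalIntegral.integral_const_mul]
  calc (∫ x in (-(1 / 2) : ℝ)..(1 / 2 : ℝ),
        ∫ θ₁ in (0 : ℝ)..(2 * Real.pi), ∫ θ₂ in (0 : ℝ)..(2 * Real.pi), G (Ψ * x) θ₁ θ₂)
      = ∫ x in (-(1 / 2) : ℝ)..(1 / 2 : ℝ), (-(Real.sin (Ψ * x))) • D₂ := by
        refine intervalIntegral.integral_congr fun x _ => ?_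
        rw [key (Ψ * x), hD₁, mul_zero, zero_sub, ← Complex.ofReal_sin, Complex.real_smul]
        push_cast
        ring
    _ = (∫ x in (-(1 / 2) : ℝ)..(1 / 2 : ℝ), (-(Real.sin (Ψ * x)))) • D₂ :=
        intervalIntegral.integral_smul_const _ _
    _ = 0 := by
        have hs : (∫ x in (-(1 / 2) : ℝ)..(1 / 2 : ℝ), Real.sin (Ψ * x)) = 0 := by
          rcases eq_or_ne Ψ 0 with h | h
          · simp [h]
          · rw [intervalIntegral.integral_comp_mul_left Real.sin h, integral_sin,
              show Ψ * (-(1 / 2)) = -(Ψ * (1 / 2)) by ring, Real.cos_neg]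
            simp
        rw [intervalIntegral.integral_neg, hs]
        simp

private lemma expEq {w z : ℂ} (m : ℤ) (h : w = z + (m : ℂ) * (2 * (Real.pi : ℂ) * Complex.I)) :
    Complex.exp w = Complex.exp z := by
  rw [h, Complex.exp_add, Complex.exp_int_mul_two_pi_mul_I, mul_one]

private lemma exp_refl_nat (n : ℕ) (θ : ℝ) :
    Complex.exp (Complex.I * ((n : ℂ) * ((2 * Real.pi - θ : ℝ) : ℂ))) =
      Complex.exp (-(Complex.I * ((n : ℂ) * (θ : ℂ)))) :=
  expEq (n : ℤ) (by push_cast; ring)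

private lemma exp_refl_nat' (n : ℕ) (θ : ℝ) :
    Complex.exp (-(Complex.I * ((n : ℂ) * ((2 * Real.pi - θ : ℝ) : ℂ)))) =
      Complex.exp (Complex.I * ((n : ℂ) * (θ : ℂ))) :=
  expEq (-(n : ℤ)) (by push_cast; ring)

private lemma exp_refl_nat1 (n : ℕ) (θ : ℝ) :
    Complex.exp (-(Complex.I * (((n : ℂ) + 1) * ((2 * Real.pi - θ : ℝ) : ℂ)))) =
      Complex.exp (Complex.I * (((n : ℂ) + 1) * (θ : ℂ))) :=
  expEq (-((n : ℤ) + 1)) (by push_cast; ring)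

private lemma sinRefl (z : ℂ) : Complex.sin (2 * (Real.pi : ℂ) - z) = -Complex.sin z := by
  rw [show 2 * (Real.pi : ℂ) - z = -z + 2 * (Real.pi : ℂ) by ring, Complex.sin_add_two_pi,
    Complex.sin_neg]

/-- cosine counterpart of `chiEven`. -/
private def chiEvenC (α : ℝ) (k : ℕ) (a : ℕ → ℂ) (θ₁ θ₂ : ℝ) : ℂ :=
  2 * (α : ℂ) *
    (Complex.cos (θ₁ : ℂ) * a 0
        * Complex.exp (Complex.I * (((k - 1 : ℕ) : ℂ) * (θ₂ : ℂ)))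
      + Complex.cos ((θ₁ : ℂ) + (θ₂ : ℂ))
        * ∑ n ∈ Finset.Icc 1 (k - 1), a n
            * Complex.exp (-(Complex.I * ((n : ℂ) * (θ₁ : ℂ))))
            * Complex.exp (Complex.I * (((k - n : ℕ) : ℂ) * (θ₂ : ℂ)))
      + Complex.cos ((θ₁ : ℂ) - (θ₂ : ℂ))
        * ∑ n ∈ Finset.Icc 1 (k - 1), a n
            * Complex.exp (Complex.I * ((n : ℂ) * (θ₁ : ℂ)))
            * Complex.exp (Complex.I * (((k - n : ℕ) : ℂ) * (θ₂ : ℂ))))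

/-- cosine counterpart of `chiOdd`. -/
private def chiOddC (α : ℝ) (k : ℕ) (a : ℕ → ℂ) (θ₁ θ₂ : ℝ) : ℂ :=
  2 * (α : ℂ) *
    (Complex.cos ((θ₁ : ℂ) + (θ₂ : ℂ))
        * ∑ n ∈ Finset.range (k - 1), a n
            * Complex.exp (Complex.I * ((n : ℂ) * (θ₁ : ℂ)))
            * Complex.exp (-(Complex.I * (((k - n : ℕ) : ℂ) * (θ₂ : ℂ))))
      + Complex.cos ((θ₁ : ℂ) - (θ₂ : ℂ))
        * ∑ n ∈ Finset.range (k - 1), a n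
            * Complex.exp (-(Complex.I * (((n : ℂ) + 1) * (θ₁ : ℂ))))
            * Complex.exp (-(Complex.I * (((k - n : ℕ) : ℂ) * (θ₂ : ℂ)))))

private lemma chiEven_decomp (α Φ : ℝ) (k : ℕ) (a : ℕ → ℂ) (θ₁ θ₂ : ℝ) :
    chiEven α Φ k a θ₁ θ₂ =
      Complex.cos (Φ : ℂ) * chiEven α 0 k a θ₁ θ₂
        - Complex.sin (Φ : ℂ) * chiEvenC α k a θ₁ θ₂ := by
  unfold chiEven chiEvenC
  simp only [Complex.ofReal_zero, sub_zero]
  rw [show (θ₁ : ℂ) - (Φ : ℂ) + (θ₂ : ℂ) = ((θ₁ : ℂ) + θ₂) - Φ by ring,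
    show (θ₁ : ℂ) - (Φ : ℂ) - (θ₂ : ℂ) = ((θ₁ : ℂ) - θ₂) - Φ by ring]
  simp only [Complex.sin_sub]
  ring

private lemma chiOdd_decomp (α Φ : ℝ) (k : ℕ) (a : ℕ → ℂ) (θ₁ θ₂ : ℝ) :
    chiOdd α Φ k a θ₁ θ₂ =
      Complex.cos (Φ : ℂ) * chiOdd α 0 k a θ₁ θ₂
        - Complex.sin (Φ : ℂ) * chiOddC α k a θ₁ θ₂ := by
  unfold chiOdd chiOddC
  simp only [Complex.ofReal_zero, sub_zero]
  rw [show (θ₁ : ℂ) - (Φ : ℂ) + (θ₂ : ℂ) = ((θ₁ : ℂ) + θ₂) - Φ by ring,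
    show (θ₁ : ℂ) - (Φ : ℂ) - (θ₂ : ℂ) = ((θ₁ : ℂ) - θ₂) - Φ by ring]
  simp only [Complex.sin_sub]
  ring

private lemma psiEven_refl (k : ℕ) (a : ℕ → ℂ) (θ₁ θ₂ : ℝ) :
    psiEven k a (2 * Real.pi - θ₁) θ₂ = psiEven k a θ₁ θ₂ := by
  unfold psiEven
  congr 1
  refine Finset.sum_congr rfl fun n _ => ?_
  rw [exp_refl_nat n θ₁, exp_refl_nat' n θ₁]
  ring

private lemma chiEven_refl (α : ℝ) (k : ℕ) (a : ℕ → ℂ) (θ₁ θ₂ : ℝ) :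
    chiEven α 0 k a (2 * Real.pi - θ₁) θ₂ = -chiEven α 0 k a θ₁ θ₂ := by
  unfold chiEven
  simp only [Complex.ofReal_zero, sub_zero, exp_refl_nat, exp_refl_nat']
  rw [show ((2 * Real.pi - θ₁ : ℝ) : ℂ) = 2 * (Real.pi : ℂ) - (θ₁ : ℂ) by push_cast; ring,
    show 2 * (Real.pi : ℂ) - (θ₁ : ℂ) + (θ₂ : ℂ) = 2 * (Real.pi : ℂ) - ((θ₁ : ℂ) - θ₂) by ring,
    show 2 * (Real.pi : ℂ) - (θ₁ : ℂ) - (θ₂ : ℂ) = 2 * (Real.pi : ℂ) - ((θ₁ : ℂ) + θ₂) by ring,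
    sinRefl, sinRefl, sinRefl]
  ring

private lemma psiOdd_refl (k : ℕ) (a : ℕ → ℂ) (θ₁ θ₂ : ℝ) :
    psiOdd k a (2 * Real.pi - θ₁) θ₂ =
      Complex.exp (Complex.I * (θ₁ : ℂ)) * psiOdd k a θ₁ θ₂ := by
  unfold psiOdd
  rw [Finset.mul_sum]
  refine Finset.sum_congr rfl fun n _ => ?_
  rw [exp_refl_nat n θ₁, exp_refl_nat1 n θ₁]
  have h1 : Complex.exp (Complex.I * (θ₁ : ℂ)) * Complex.exp (Complex.I * ((n : ℂ) * (θ₁ : ℂ)))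
      = Complex.exp (Complex.I * (((n : ℂ) + 1) * (θ₁ : ℂ))) := by
    rw [← Complex.exp_add]; congr 1; ring
  have h2 : Complex.exp (Complex.I * (θ₁ : ℂ))
        * Complex.exp (-(Complex.I * (((n : ℂ) + 1) * (θ₁ : ℂ))))
      = Complex.exp (-(Complex.I * ((n : ℂ) * (θ₁ : ℂ)))) := by
    rw [← Complex.exp_add]; congr 1; ring
  rw [← h1, ← h2]
  ring

private lemma chiOdd_refl (α : ℝ) (k : ℕ) (a : ℕ → ℂ) (θ₁ θ₂ : ℝ) :
    chiOdd α 0 k a (2 * Real.pi - θ₁) θ₂ =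
      -(Complex.exp (Complex.I * (θ₁ : ℂ)) * chiOdd α 0 k a θ₁ θ₂) := by
  unfold chiOdd
  simp only [Complex.ofReal_zero, sub_zero, exp_refl_nat, exp_refl_nat1]
  rw [show ((2 * Real.pi - θ₁ : ℝ) : ℂ) = 2 * (Real.pi : ℂ) - (θ₁ : ℂ) by push_cast; ring,
    show 2 * (Real.pi : ℂ) - (θ₁ : ℂ) + (θ₂ : ℂ) = 2 * (Real.pi : ℂ) - ((θ₁ : ℂ) - θ₂) by ring,
    show 2 * (Real.pi : ℂ) - (θ₁ : ℂ) - (θ₂ : ℂ) = 2 * (Real.pi : ℂ) - ((θ₁ : ℂ) + θ₂) by ring,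
    sinRefl, sinRefl]
  have s1 : (∑ n ∈ Finset.range (k - 1), a n
        * Complex.exp (-(Complex.I * ((n : ℂ) * (θ₁ : ℂ))))
        * Complex.exp (-(Complex.I * (((k - n : ℕ) : ℂ) * (θ₂ : ℂ)))))
      = Complex.exp (Complex.I * (θ₁ : ℂ)) * ∑ n ∈ Finset.range (k - 1), a n
        * Complex.exp (-(Complex.I * (((n : ℂ) + 1) * (θ₁ : ℂ))))
        * Complex.exp (-(Complex.I * (((k - n : ℕ) : ℂ) * (θ₂ : ℂ)))) := by
    rw [Finset.mul_sum]
    refine Finset.sum_congr rfl fun n _ => ?_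
    have h2 : Complex.exp (Complex.I * (θ₁ : ℂ))
          * Complex.exp (-(Complex.I * (((n : ℂ) + 1) * (θ₁ : ℂ))))
        = Complex.exp (-(Complex.I * ((n : ℂ) * (θ₁ : ℂ)))) := by
      rw [← Complex.exp_add]; congr 1; ring
    rw [← h2]; ring
  have s2 : (∑ n ∈ Finset.range (k - 1), a n
        * Complex.exp (Complex.I * (((n : ℂ) + 1) * (θ₁ : ℂ)))
        * Complex.exp (-(Complex.I * (((k - n : ℕ) : ℂ) * (θ₂ : ℂ)))))
      = Complex.exp (Complex.I * (θ₁ : ℂ)) * ∑ n ∈ Finset.range (k - 1), a n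
        * Complex.exp (Complex.I * ((n : ℂ) * (θ₁ : ℂ)))
        * Complex.exp (-(Complex.I * (((k - n : ℕ) : ℂ) * (θ₂ : ℂ)))) := by
    rw [Finset.mul_sum]
    refine Finset.sum_congr rfl fun n _ => ?_
    have h1 : Complex.exp (Complex.I * (θ₁ : ℂ))
          * Complex.exp (Complex.I * ((n : ℂ) * (θ₁ : ℂ)))
        = Complex.exp (Complex.I * (((n : ℂ) + 1) * (θ₁ : ℂ))) := by
      rw [← Complex.exp_add]; congr 1; ring
    rw [← h1]; ring
  rw [s1, s2]
  ring

private lemma cont_psiEven (k : ℕ) (a : ℕ → ℂ) :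
    Continuous fun p : ℝ × ℝ => psiEven k a p.1 p.2 := by
  unfold psiEven; fun_prop

private lemma cont_chiEven (α Φ : ℝ) (k : ℕ) (a : ℕ → ℂ) :
    Continuous fun p : ℝ × ℝ => chiEven α Φ k a p.1 p.2 := by
  unfold chiEven; fun_prop

private lemma cont_chiEvenC (α : ℝ) (k : ℕ) (a : ℕ → ℂ) :
    Continuous fun p : ℝ × ℝ => chiEvenC α k a p.1 p.2 := by
  unfold chiEvenC; fun_prop

private lemma cont_psiOdd (k : ℕ) (a : ℕ → ℂ) :
    Continuous fun p : ℝ × ℝ => psiOdd k a p.1 p.2 := by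
  unfold psiOdd; fun_prop

private lemma cont_chiOdd (α Φ : ℝ) (k : ℕ) (a : ℕ → ℂ) :
    Continuous fun p : ℝ × ℝ => chiOdd α Φ k a p.1 p.2 := by
  unfold chiOdd; fun_prop

private lemma cont_chiOddC (α : ℝ) (k : ℕ) (a : ℕ → ℂ) :
    Continuous fun p : ℝ × ℝ => chiOddC α k a p.1 p.2 := by
  unfold chiOddC; fun_prop


/-- vanishing of the Fraunhofer pattern.  For a standing wave or a
one-mode shifted standing wave, the total Josephson current
`∫_{−1/2}^{1/2} B(Ψx) dx` vanishes, where `B(Φ) = ⟨ψ, I_{S¹}(Φ)ψ⟩`. -/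
theorem stmt19 (α Ψ : ℝ) :
    (∀ k : ℕ, 2 ≤ k → ∀ a : ℕ → ℂ,
      (∫ x in (-(1 / 2) : ℝ)..(1 / 2 : ℝ),
        ∫ θ₁ in (0 : ℝ)..(2 * Real.pi), ∫ θ₂ in (0 : ℝ)..(2 * Real.pi),
          (starRingEnd ℂ) (psiEven k a θ₁ θ₂) * chiEven α (Ψ * x) k a θ₁ θ₂) = 0) ∧
    (∀ k : ℕ, 3 ≤ k → ∀ a : ℕ → ℂ,
      (∫ x in (-(1 / 2) : ℝ)..(1 / 2 : ℝ),
        ∫ θ₁ in (0 : ℝ)..(2 * Real.pi), ∫ θ₂ in (0 : ℝ)..(2 * Real.pi),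
          (starRingEnd ℂ) (psiOdd k a θ₁ θ₂) * chiOdd α (Ψ * x) k a θ₁ θ₂) = 0) := by
  
  constructor
  · intro k _ a
    refine machine Ψ
      (fun θ₁ θ₂ => (starRingEnd ℂ) (psiEven k a θ₁ θ₂) * chiEven α 0 k a θ₁ θ₂)
      (fun θ₁ θ₂ => (starRingEnd ℂ) (psiEven k a θ₁ θ₂) * chiEvenC α k a θ₁ θ₂)
      (fun Φ θ₁ θ₂ => (starRingEnd ℂ) (psiEven k a θ₁ θ₂) * chiEven α Φ k a θ₁ θ₂)
      ?_ ?_ ?_ ?_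
    · exact (Complex.continuous_conj.comp (cont_psiEven k a)).mul (cont_chiEven α 0 k a)
    · exact (Complex.continuous_conj.comp (cont_psiEven k a)).mul (cont_chiEvenC α k a)
    · intro Φ θ₁ θ₂
      rw [chiEven_decomp α Φ k a θ₁ θ₂]
      ring
    · intro θ₁ θ₂
      rw [psiEven_refl, chiEven_refl]
      ring
  · intro k _ a
    refine machine Ψ
      (fun θ₁ θ₂ => (starRingEnd ℂ) (psiOdd k a θ₁ θ₂) * chiOdd α 0 k a θ₁ θ₂)
      (fun θ₁ θ₂ => (starRingEnd ℂ) (psiOdd k a θ₁ θ₂) * chiOddC α k a θ₁ θ₂)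
      (fun Φ θ₁ θ₂ => (starRingEnd ℂ) (psiOdd k a θ₁ θ₂) * chiOdd α Φ k a θ₁ θ₂)
      ?_ ?_ ?_ ?_
    · exact (Complex.continuous_conj.comp (cont_psiOdd k a)).mul (cont_chiOdd α 0 k a)
    · exact (Complex.continuous_conj.comp (cont_psiOdd k a)).mul (cont_chiOddC α k a)
    · intro Φ θ₁ θ₂
      rw [chiOdd_decomp α Φ k a θ₁ θ₂]
      ring
    · intro θ₁ θ₂
      rw [psiOdd_refl, chiOdd_refl, map_mul]
      have hconj : (starRingEnd ℂ) (Complex.exp (Complex.I * (θ₁ : ℂ)))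
          = Complex.exp (-(Complex.I * (θ₁ : ℂ))) := by
        rw [← Complex.exp_conj]
        congr 1
        simp [Complex.conj_ofReal]
      have hinv : Complex.exp (-(Complex.I * (θ₁ : ℂ))) * Complex.exp (Complex.I * (θ₁ : ℂ))
          = 1 := by
        rw [← Complex.exp_add]
        simp
      rw [hconj]
      linear_combination (-((starRingEnd ℂ) (psiOdd k a θ₁ θ₂) * chiOdd α 0 k a θ₁ θ₂)) * hinv
end
end
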